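/- arXiv:1708.07849 — 4 statements merged into one kernel-verified Lean document; each statement's English description precedes it below -/
import Mathlib

section
/- Let A be a 2×2 real matrix and B an invertible n×n real matrix, and define T : ℝ^{2×n} → ℝ^{2×n} by T(X) = AXB. If ν is a homogeneous gradient Young measure on ℝ^{2×n}, then the pushforward measure T_#ν is a homogeneous gradient Young measure. -/
open MeasureTheory

noncomputable section

instance matrixMeasurableSpace {m n : ℕ} : MeasurableSpace (Matrix (Fin m) (Fin n) ℝ) :=
  show MeasurableSpace (Fin m → Fin n → ℝ) from inferInstance

/-- The Jacobian matrix of `φ : ℝⁿ → ℝᵐ` at `x`. -/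
def jacobianM (m n : ℕ) (φ : (Fin n → ℝ) → (Fin m → ℝ)) (x : Fin n → ℝ) :
    Matrix (Fin m) (Fin n) ℝ :=
  Matrix.of fun i j => fderiv ℝ φ x (Pi.single j 1) i

/-- `f : ℝ^{m×n} → ℝ` is quasiconvex: `f` is Borel measurable, locally bounded, and for every
nonempty bounded open `Ω ⊆ ℝⁿ`, every `X₀` and every smooth `φ` compactly supported in `Ω`,
`f X₀ * |Ω| ≤ ∫_Ω f (X₀ + Dφ x) dx`. -/
def IsQuasiconvex {m n : ℕ} (f : Matrix (Fin m) (Fin n) ℝ → ℝ) : Prop :=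
  Measurable f ∧
  (∀ K : Set (Matrix (Fin m) (Fin n) ℝ), IsCompact K → ∃ C : ℝ, ∀ X ∈ K, |f X| ≤ C) ∧
  ∀ Ω : Set (Fin n → ℝ), IsOpen Ω → Ω.Nonempty → Bornology.IsBounded Ω →
    ∀ (X₀ : Matrix (Fin m) (Fin n) ℝ) (φ : (Fin n → ℝ) → (Fin m → ℝ)),
      ContDiff ℝ (⊤ : ℕ∞) φ → HasCompactSupport φ → tsupport φ ⊆ Ω →
      f X₀ * (volume Ω).toReal ≤ ∫ x in Ω, f (X₀ + jacobianM m n φ x)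

/-- `f : ℝ^{m×n} → ℝ` is rank-one convex. -/
def IsRankOneConvex {m n : ℕ} (f : Matrix (Fin m) (Fin n) ℝ → ℝ) : Prop :=
  ∀ X Y : Matrix (Fin m) (Fin n) ℝ, (X - Y).rank ≤ 1 →
    ∀ t : ℝ, t ∈ Set.Icc (0 : ℝ) 1 →
      f (t • X + (1 - t) • Y) ≤ t * f X + (1 - t) * f Y

/-- The barycentre `μ̄ = ∫ X dμ(X)`, computed entrywise. -/
def matBarycenter {m n : ℕ} (μ : Measure (Matrix (Fin m) (Fin n) ℝ)) :
    Matrix (Fin m) (Fin n) ℝ :=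
  Matrix.of fun i j => ∫ X, X i j ∂μ

/-- `M^{2×n}_tri`: second row is `(0, …, 0, a)`. -/
def Mtri (n : ℕ) : Set (Matrix (Fin 2) (Fin n) ℝ) :=
  {X | ∀ j : Fin n, (j : ℕ) + 1 < n → X 1 j = 0}

/-- `M^{2×n}_diag`: first row `(a₁, …, a_{n-1}, 0)`, second row `(0, …, 0, b)`. -/
def Mdiag (n : ℕ) : Set (Matrix (Fin 2) (Fin n) ℝ) :=
  {X | (∀ j : Fin n, (j : ℕ) + 1 < n → X 1 j = 0) ∧
       (∀ j : Fin n, (j : ℕ) + 1 = n → X 0 j = 0)}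

/-- The orthogonal projection of `ℝ^{2×n}` onto `M^{2×n}_diag`. -/
def Pdiag (n : ℕ) (X : Matrix (Fin 2) (Fin n) ℝ) : Matrix (Fin 2) (Fin n) ℝ :=
  Matrix.of fun i j =>
    if i = 0 then (if (j : ℕ) + 1 < n then X 0 j else 0)
    else (if (j : ℕ) + 1 = n then X 1 j else 0)

/-- A homogeneous gradient Young measure: a compactly supported Borel probability measure
satisfying Jensen's inequality for all quasiconvex functions. -/
def IsHomogeneousGradientYoungMeasure {m n : ℕ}
    (μ : Measure (Matrix (Fin m) (Fin n) ℝ)) : Prop :=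
  IsProbabilityMeasure μ ∧ (∃ K, IsCompact K ∧ μ Kᶜ = 0) ∧
  ∀ f : Matrix (Fin m) (Fin n) ℝ → ℝ, IsQuasiconvex f →
    f (matBarycenter μ) ≤ ∫ X, f X ∂μ

/-- A laminate: a compactly supported Borel probability measure
satisfying Jensen's inequality for all rank-one convex functions. -/
def IsLaminate {m n : ℕ} (μ : Measure (Matrix (Fin m) (Fin n) ℝ)) : Prop :=
  IsProbabilityMeasure μ ∧ (∃ K, IsCompact K ∧ μ Kᶜ = 0) ∧
  ∀ f : Matrix (Fin m) (Fin n) ℝ → ℝ, IsRankOneConvex f →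
    f (matBarycenter μ) ≤ ∫ X, f X ∂μ

/-- `M^{2×2}_+ = {X : X₁₂ > 0}`. -/
def Mplus : Set (Matrix (Fin 2) (Fin 2) ℝ) := {X | 0 < X 0 1}

/-- The partial Legendre transform `Ψ`. -/
def Psi (X : Matrix (Fin 2) (Fin 2) ℝ) : Matrix (Fin 2) (Fin 2) ℝ :=
  (X 0 1)⁻¹ • !![-(X 0 0), 1; -X.det, X 1 1]

/-- The dual function `h̃(X) = X₁₂ · h(Ψ(X))`. -/
def dualFn (h : Matrix (Fin 2) (Fin 2) ℝ → ℝ) (X : Matrix (Fin 2) (Fin 2) ℝ) : ℝ :=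
  X 0 1 * h (Psi X)

/-- The dual measure `μ̃`, characterised by
`∫ f dμ̃ = (1/μ̄₁₂) ∫ X₁₂ · f(Ψ(X)) dμ(X)` for all Borel `f : M → [0,∞]`. -/
def dualMeasure (μ : Measure (Matrix (Fin 2) (Fin 2) ℝ)) :
    Measure (Matrix (Fin 2) (Fin 2) ℝ) :=
  Measure.map Psi
    ((ENNReal.ofReal (matBarycenter μ 0 1))⁻¹ •
      μ.withDensity fun X => ENNReal.ofReal (X 0 1))

/-- The (topological) support of a measure. -/
def mSupport {α : Type*} [TopologicalSpace α] [MeasurableSpace α] (μ : Measure α) : Set α :=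
  {x | ∀ U : Set α, IsOpen U → x ∈ U → μ U ≠ 0}

/-- `f` is quasiconvex on the open set `U ⊆ ℝ^{2×2}`. -/
def IsQuasiconvexOn (U : Set (Matrix (Fin 2) (Fin 2) ℝ))
    (f : Matrix (Fin 2) (Fin 2) ℝ → ℝ) : Prop :=
  ∀ Ω : Set (Fin 2 → ℝ), IsOpen Ω → Ω.Nonempty → Bornology.IsBounded Ω →
    ∀ (A : Matrix (Fin 2) (Fin 2) ℝ) (φ : (Fin 2 → ℝ) → (Fin 2 → ℝ)),
      ContDiff ℝ (⊤ : ℕ∞) φ → HasCompactSupport φ → tsupport φ ⊆ Ω →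
      (∀ x, A + jacobianM 2 2 φ x ∈ U) →
      f A * (volume Ω).toReal ≤ ∫ x in Ω, f (A + jacobianM 2 2 φ x)

/-- `f` is rank-one convex on the open convex set `U ⊆ ℝ^{2×2}`. -/
def IsRankOneConvexOn (U : Set (Matrix (Fin 2) (Fin 2) ℝ))
    (f : Matrix (Fin 2) (Fin 2) ℝ → ℝ) : Prop :=
  ∀ X ∈ U, ∀ Y ∈ U, (X - Y).rank ≤ 1 →
    ∀ t : ℝ, t ∈ Set.Icc (0 : ℝ) 1 →
      f (t • X + (1 - t) • Y) ≤ t * f X + (1 - t) * f Y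


section AuxForPushforward

instance matrixBorelSpace {m n : ℕ} : BorelSpace (Matrix (Fin m) (Fin n) ℝ) :=
  show BorelSpace (Fin m → Fin n → ℝ) from inferInstance

lemma integrable_of_cpt {α : Type*} [TopologicalSpace α] [MeasurableSpace α] [BorelSpace α]
    {ν : Measure α} [IsProbabilityMeasure ν] {K : Set α} (hK : IsCompact K) (hKc : ν Kᶜ = 0)
    {g : α → ℝ} (hg : Continuous g) : Integrable g ν := by
  obtain ⟨C, hC⟩ := hK.exists_bound_of_continuousOn hg.continuousOn
  refine ⟨hg.aestronglyMeasurable, HasFiniteIntegral.of_bounded (C := C) ?_⟩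
  filter_upwards [measure_eq_zero_iff_ae_notMem.mp hKc] with x hx
  exact hC x (by simpa using hx)

lemma barycenter_map (n : ℕ) (A : Matrix (Fin 2) (Fin 2) ℝ) (B : Matrix (Fin n) (Fin n) ℝ)
    (ν : Measure (Matrix (Fin 2) (Fin n) ℝ)) [IsProbabilityMeasure ν]
    {K : Set (Matrix (Fin 2) (Fin n) ℝ)} (hK : IsCompact K) (hKc : ν Kᶜ = 0) :
    matBarycenter (ν.map fun X => A * X * B) = A * matBarycenter ν * B := by
  have hT : Measurable (fun X : Matrix (Fin 2) (Fin n) ℝ => A * X * B) :=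
    ((continuous_const.matrix_mul continuous_id).matrix_mul continuous_const).measurable
  have heval : ∀ k c, Continuous (fun X : Matrix (Fin 2) (Fin n) ℝ => X k c) := fun k c =>
    (continuous_apply_apply k c)
  ext i j
  show ∫ X, X i j ∂(ν.map fun X => A * X * B) = (A * matBarycenter ν * B) i j
  rw [integral_map hT.aemeasurable ((heval i j).aestronglyMeasurable)]
  have : ∀ X : Matrix (Fin 2) (Fin n) ℝ,
      (A * X * B) i j = ∑ c, ∑ k, (A i k * B c j) * X k c := by
    intro X
    simp only [Matrix.mul_apply, Finset.sum_mul]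
    exact Finset.sum_congr rfl fun c _ => Finset.sum_congr rfl fun k _ => by ring
  simp only [this]
  rw [integral_finset_sum]
  · have : ∀ c ∈ Finset.univ, ∫ X, (∑ k, (A i k * B c j) * X k c) ∂ν
        = ∑ k, (A i k * B c j) * ∫ X, X k c ∂ν := by
      intro c _
      rw [integral_finset_sum]
      · exact Finset.sum_congr rfl fun k _ => integral_const_mul _ _
      · exact fun k _ => (integrable_of_cpt hK hKc (continuous_const.mul (heval k c)))
    rw [Finset.sum_congr rfl this]
    simp only [Matrix.mul_apply, matBarycenter, Matrix.of_apply, Finset.sum_mul]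
    try exact Finset.sum_congr rfl fun c _ => Finset.sum_congr rfl fun k _ => by ring
  · exact fun c _ => integrable_finset_sum _ fun k _ =>
      (integrable_of_cpt hK hKc (continuous_const.mul (heval k c)))

lemma continuous_jacobianM {m n : ℕ} {φ : (Fin n → ℝ) → (Fin m → ℝ)}
    (hφ : ContDiff ℝ (⊤ : ℕ∞) φ) : Continuous (jacobianM m n φ) := by
  apply continuous_pi; intro i; apply continuous_pi; intro j
  have h1 : Continuous (fun x => fderiv ℝ φ x (Pi.single j (1:ℝ))) :=
    (hφ.continuous_fderiv (by norm_num)).clm_apply continuous_const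
  exact (continuous_apply i).comp h1

lemma clm_apply_eq_sum {n m : ℕ} (D : (Fin n → ℝ) →L[ℝ] (Fin m → ℝ)) (w : Fin n → ℝ) (i : Fin m) :
    D w i = ∑ p, w p * D (Pi.single p 1) i := by
  have hw : w = ∑ p, w p • (Pi.single p 1 : Fin n → ℝ) := by
    ext q
    simp [Pi.single_apply, Finset.sum_apply]
  conv_lhs => rw [hw]
  rw [map_sum]
  simp [Finset.sum_apply]

lemma jacobian_comp {n : ℕ} (A : Matrix (Fin 2) (Fin 2) ℝ) (B : Matrix (Fin n) (Fin n) ℝ)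
    (φ : (Fin n → ℝ) → (Fin 2 → ℝ)) (hφ : ContDiff ℝ (⊤ : ℕ∞) φ) (y : Fin n → ℝ) :
    jacobianM 2 n (fun z => A.mulVec (φ (B.mulVec z))) y
      = A * jacobianM 2 n φ (B.mulVec y) * B := by
  set Aclm : (Fin 2 → ℝ) →L[ℝ] (Fin 2 → ℝ) := LinearMap.toContinuousLinearMap (Matrix.mulVecLin A)
  set Bclm : (Fin n → ℝ) →L[ℝ] (Fin n → ℝ) := LinearMap.toContinuousLinearMap (Matrix.mulVecLin B)
  have hA : ∀ v, Aclm v = A.mulVec v := fun v => by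
    simp [Aclm, LinearMap.coe_toContinuousLinearMap']
  have hBv : ∀ v, Bclm v = B.mulVec v := fun v => by
    simp [Bclm, LinearMap.coe_toContinuousLinearMap']
  set D : (Fin n → ℝ) →L[ℝ] (Fin 2 → ℝ) := fderiv ℝ φ (B.mulVec y)
  have hφd : HasFDerivAt φ D (Bclm y) := by
    rw [hBv]
    exact ((hφ.differentiable (by norm_num)) _).hasFDerivAt
  have hcomp : HasFDerivAt (fun z => A.mulVec (φ (B.mulVec z)))
      ((Aclm.comp D).comp Bclm) y := by
    have h1 : HasFDerivAt (fun z => φ (Bclm z)) (D.comp Bclm) y :=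
      hφd.comp y Bclm.hasFDerivAt
    have h2 : HasFDerivAt (fun z => Aclm (φ (Bclm z))) (Aclm.comp (D.comp Bclm)) y :=
      (Aclm.hasFDerivAt).comp y h1
    have : (fun z => Aclm (φ (Bclm z))) = fun z => A.mulVec (φ (B.mulVec z)) := by
      funext z; rw [hA, hBv]
    rw [this] at h2
    rw [ContinuousLinearMap.comp_assoc]
    exact h2
  ext i j
  show fderiv ℝ (fun z => A.mulVec (φ (B.mulVec z))) y (Pi.single j 1) i = _
  rw [hcomp.fderiv]
  simp only [ContinuousLinearMap.coe_comp', Function.comp_apply]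
  rw [hBv, Matrix.mulVec_single_one, hA]
  have hDv : ∀ w i', D w i' = ∑ p, w p * (jacobianM 2 n φ (B.mulVec y)) i' p := by
    intro w i'
    rw [clm_apply_eq_sum]
    rfl
  simp only [Matrix.mulVec, dotProduct, Matrix.mul_apply, hDv, Matrix.col_apply]
  simp only [Finset.mul_sum, Finset.sum_mul]
  rw [Finset.sum_comm]
  refine Finset.sum_congr rfl fun c _ => Finset.sum_congr rfl fun k _ => by ring

lemma map_mulVec_volume {n : ℕ} (B : Matrix (Fin n) (Fin n) ℝ) (hdet : B.det ≠ 0) :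
    Measure.map (fun y : Fin n → ℝ => B.mulVec y) volume
      = ENNReal.ofReal |B.det|⁻¹ • volume := by
  have h1 : LinearMap.det (Matrix.toLin' B) = B.det := LinearMap.det_toLin' B
  have h2 : (fun y : Fin n → ℝ => B.mulVec y) = ⇑(Matrix.toLin' B) := by
    funext y; rw [Matrix.toLin'_apply]
  rw [h2, Real.map_linearMap_volume_pi_eq_smul_volume_pi (by rw [h1]; exact hdet), h1, abs_inv]

lemma continuous_mulVec {n : ℕ} (B : Matrix (Fin n) (Fin n) ℝ) :
    Continuous (fun y : Fin n → ℝ => B.mulVec y) := by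
  have := (LinearMap.toContinuousLinearMap (Matrix.mulVecLin B)).continuous
  simpa [LinearMap.coe_toContinuousLinearMap', Matrix.coe_mulVecLin] using this

lemma integral_comp_mulVec {n : ℕ} (B : Matrix (Fin n) (Fin n) ℝ) (hdet : B.det ≠ 0)
    (F : (Fin n → ℝ) → ℝ) (hF : Measurable F) :
    ∫ y, F (B.mulVec y) = |B.det|⁻¹ * ∫ x, F x := by
  rw [← integral_map (continuous_mulVec B).measurable.aemeasurable hF.aestronglyMeasurable,
    map_mulVec_volume B hdet, integral_smul_measure]
  rw [ENNReal.toReal_ofReal (by positivity)]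
  simp [smul_eq_mul]

lemma volume_preimage_mulVec {n : ℕ} (B : Matrix (Fin n) (Fin n) ℝ) (hdet : B.det ≠ 0)
    {Ω : Set (Fin n → ℝ)} (hΩ : MeasurableSet Ω) :
    volume ((fun y : Fin n → ℝ => B.mulVec y) ⁻¹' Ω) = ENNReal.ofReal |B.det|⁻¹ * volume Ω := by
  rw [← Measure.map_apply (continuous_mulVec B).measurable hΩ, map_mulVec_volume B hdet,
    Measure.smul_apply, smul_eq_mul]

lemma isQuasiconvex_comp {n : ℕ} (A : Matrix (Fin 2) (Fin 2) ℝ) (B : Matrix (Fin n) (Fin n) ℝ)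
    (hB : IsUnit B) {f : Matrix (Fin 2) (Fin n) ℝ → ℝ} (hf : IsQuasiconvex f) :
    IsQuasiconvex (fun X : Matrix (Fin 2) (Fin n) ℝ => f (A * X * B)) := by
  obtain ⟨hfm, hfb, hfq⟩ := hf
  have hTc : Continuous (fun X : Matrix (Fin 2) (Fin n) ℝ => A * X * B) :=
    (continuous_const.matrix_mul continuous_id).matrix_mul continuous_const
  have hdet : B.det ≠ 0 := by
    have := hB.map Matrix.detMonoidHom
    simpa [isUnit_iff_ne_zero] using this
  have hdet' : IsUnit B.det := hB.map Matrix.detMonoidHom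
  set C : Matrix (Fin n) (Fin n) ℝ := B⁻¹ with hCdef
  have hBC : B * C = 1 := Matrix.mul_nonsing_inv B hdet'
  have hCB : C * B = 1 := Matrix.nonsing_inv_mul B hdet'
  have hBCvec : ∀ x, B.mulVec (C.mulVec x) = x := fun x => by
    rw [Matrix.mulVec_mulVec, hBC, Matrix.one_mulVec]
  have hCBvec : ∀ x, C.mulVec (B.mulVec x) = x := fun x => by
    rw [Matrix.mulVec_mulVec, hCB, Matrix.one_mulVec]
  have hpre : ∀ S : Set (Fin n → ℝ),
      (fun y : Fin n → ℝ => B.mulVec y) ⁻¹' S = (fun x : Fin n → ℝ => C.mulVec x) '' S := by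
    intro S
    ext y
    constructor
    · intro hy
      exact ⟨B.mulVec y, hy, hCBvec y⟩
    · rintro ⟨x, hx, rfl⟩
      simpa [hBCvec x] using hx
  refine ⟨hfm.comp hTc.measurable, ?_, ?_⟩
  · intro K hK
    obtain ⟨Cb, hCb⟩ := hfb ((fun X => A * X * B) '' K) (hK.image hTc)
    exact ⟨Cb, fun X hX => hCb _ (Set.mem_image_of_mem _ hX)⟩
  · intro Ω hΩo hΩne hΩb X₀ φ hφ hφcs hφsupp
    set ψ : (Fin n → ℝ) → (Fin 2 → ℝ) := fun z => A.mulVec (φ (B.mulVec z)) with hψdef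
    set Ω' : Set (Fin n → ℝ) := (fun y : Fin n → ℝ => B.mulVec y) ⁻¹' Ω with hΩ'def
    have hΩ'o : IsOpen Ω' := hΩo.preimage (continuous_mulVec B)
    have hΩ'ne : Ω'.Nonempty := by
      obtain ⟨x, hx⟩ := hΩne
      exact ⟨C.mulVec x, by simp only [hΩ'def, Set.mem_preimage, hBCvec x]; exact hx⟩
    have hΩ'b : Bornology.IsBounded Ω' := by
      rw [hΩ'def, hpre]
      have := (LinearMap.toContinuousLinearMap (Matrix.mulVecLin C)).lipschitz
      have h := this.isBounded_image hΩb
      simpa [LinearMap.coe_toContinuousLinearMap', Matrix.coe_mulVecLin] using h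
    have hψ : ContDiff ℝ (⊤ : ℕ∞) ψ := by
      have hAc : ContDiff ℝ (⊤ : ℕ∞) (fun v : Fin 2 → ℝ => A.mulVec v) := by
        have := (LinearMap.toContinuousLinearMap (Matrix.mulVecLin A)).contDiff (n := (⊤ : ℕ∞))
        exact this
      have hBc : ContDiff ℝ (⊤ : ℕ∞) (fun v : Fin n → ℝ => B.mulVec v) := by
        have := (LinearMap.toContinuousLinearMap (Matrix.mulVecLin B)).contDiff (n := (⊤ : ℕ∞))
        simpa [LinearMap.coe_toContinuousLinearMap', Matrix.coe_mulVecLin] using this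
      exact hAc.comp (hφ.comp hBc)
    have hψsupp' : tsupport ψ ⊆ (fun y : Fin n → ℝ => B.mulVec y) ⁻¹' tsupport φ := by
      apply closure_minimal
      · intro z hz
        have : φ (B.mulVec z) ≠ 0 := by
          intro h0
          apply hz
          simp [hψdef, h0, Matrix.mulVec_zero]
        exact subset_closure this
      · exact (isClosed_tsupport φ).preimage (continuous_mulVec B)
    have hψcs : HasCompactSupport ψ := by
      have hcpt : IsCompact ((fun x : Fin n → ℝ => C.mulVec x) '' tsupport φ) :=
        hφcs.image (continuous_mulVec C)
      refine IsCompact.of_isClosed_subset hcpt (isClosed_tsupport ψ) ?_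
      rw [← hpre]
      exact hψsupp'
    have hψsupp : tsupport ψ ⊆ Ω' := hψsupp'.trans (Set.preimage_mono hφsupp)
    have key := hfq Ω' hΩ'o hΩ'ne hΩ'b (A * X₀ * B) ψ hψ hψcs hψsupp
    set G : (Fin n → ℝ) → ℝ := fun x => f (A * (X₀ + jacobianM 2 n φ x) * B) with hGdef
    have hGm : Measurable G := by
      apply hfm.comp
      apply Continuous.measurable
      exact (continuous_const.matrix_mul
        (continuous_const.add (continuous_jacobianM hφ))).matrix_mul continuous_const
    have hint : ∀ y, f (A * X₀ * B + jacobianM 2 n ψ y) = G (B.mulVec y) := by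
      intro y
      rw [hψdef, jacobian_comp A B φ hφ y]
      congr 1
      simp only [Matrix.mul_add, Matrix.add_mul]
    have hΩm : MeasurableSet Ω := hΩo.measurableSet
    have hΩ'm : MeasurableSet Ω' := hΩ'o.measurableSet
    have hrhs : ∫ y in Ω', f (A * X₀ * B + jacobianM 2 n ψ y)
        = |B.det|⁻¹ * ∫ x in Ω, G x := by
      rw [← integral_indicator hΩ'm]
      have : (Ω'.indicator fun y => f (A * X₀ * B + jacobianM 2 n ψ y))
          = fun y => (Ω.indicator G) (B.mulVec y) := by
        funext y
        rw [show (Ω'.indicator fun y => f (A * X₀ * B + jacobianM 2 n ψ y)) y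
            = (Ω'.indicator fun y => G (B.mulVec y)) y from by
          simp only [Set.indicator]; split <;> simp [hint]]
        rw [hΩ'def]
        exact Set.indicator_comp_right (fun y : Fin n → ℝ => B.mulVec y) (g := G)
      rw [this, integral_comp_mulVec B hdet _ (hGm.indicator hΩm), integral_indicator hΩm]
    have hvol : (volume Ω').toReal = |B.det|⁻¹ * (volume Ω).toReal := by
      rw [hΩ'def, volume_preimage_mulVec B hdet hΩm, ENNReal.toReal_mul,
        ENNReal.toReal_ofReal (by positivity)]
    rw [hrhs, hvol] at key
    have hd : (0:ℝ) < |B.det| := abs_pos.mpr hdet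
    have key2 := mul_le_mul_of_nonneg_left key hd.le
    calc f (A * X₀ * B) * (volume Ω).toReal
        = |B.det| * (f (A * X₀ * B) * (|B.det|⁻¹ * (volume Ω).toReal)) := by
          field_simp
      _ ≤ |B.det| * (|B.det|⁻¹ * ∫ x in Ω, G x) := key2
      _ = ∫ x in Ω, G x := by field_simp
      _ = ∫ x in Ω, f (A * (X₀ + jacobianM 2 n φ x) * B) := rfl

end AuxForPushforward

/-- If `ν` is a homogeneous gradient Young measure, so is its pushforward by `X ↦ AXB`,
for `A ∈ ℝ^{2×2}` and `B ∈ ℝ^{n×n}` invertible. -/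
theorem pushforward_mul_left_right_hgym (n : ℕ) (hn : 2 ≤ n)
    (A : Matrix (Fin 2) (Fin 2) ℝ) (B : Matrix (Fin n) (Fin n) ℝ) (hB : IsUnit B)
    (ν : Measure (Matrix (Fin 2) (Fin n) ℝ))
    (hν : IsHomogeneousGradientYoungMeasure ν) :
    IsHomogeneousGradientYoungMeasure (ν.map fun X : Matrix (Fin 2) (Fin n) ℝ => A * X * B) := by
  obtain ⟨hprob, ⟨K, hK, hKc⟩, hJ⟩ := hν
  haveI : IsProbabilityMeasure ν := hprob
  have hTc : Continuous (fun X : Matrix (Fin 2) (Fin n) ℝ => A * X * B) :=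
    (continuous_const.matrix_mul continuous_id).matrix_mul continuous_const
  have hTm : Measurable (fun X : Matrix (Fin 2) (Fin n) ℝ => A * X * B) := hTc.measurable
  refine ⟨Measure.isProbabilityMeasure_map hTm.aemeasurable, ?_, ?_⟩
  · refine ⟨(fun X => A * X * B) '' K, hK.image hTc, ?_⟩
    rw [Measure.map_apply hTm (((hK.image hTc).isClosed).measurableSet.compl)]
    refine measure_mono_null ?_ hKc
    intro X hX
    intro hXK
    exact hX (Set.mem_image_of_mem _ hXK)
  · intro f hf
    rw [barycenter_map n A B ν hK hKc,
      integral_map hTm.aemeasurable hf.1.aestronglyMeasurable]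
    exact hJ _ (isQuasiconvex_comp A B hB hf)

end
end

section
/- If μ is a finite convex combination of Dirac measures on ℝ^{2×n} with support contained in M^{2×n}_tri, and the pushforward P_#μ of μ by the projection P onto M^{2×n}_diag is a prelaminate, then μ is a prelaminate. -/
open MeasureTheory

noncomputable section

/-- The `H_l` condition on a finite list of weighted matrices: a list of length 2 satisfies it
iff the two matrices differ by a matrix of rank at most one; a longer list satisfies it iff,
after a permutation, the first two matrices are rank-one connected and the list obtained by
merging them (weighted average) satisfies the condition. -/
inductive SatisfiesH {m n : ℕ} : List (ℝ × Matrix (Fin m) (Fin n) ℝ) → Prop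
  | base (t₁ t₂ : ℝ) (Y₁ Y₂ : Matrix (Fin m) (Fin n) ℝ) :
      (Y₁ - Y₂).rank ≤ 1 → SatisfiesH [(t₁, Y₁), (t₂, Y₂)]
  | perm {L L' : List (ℝ × Matrix (Fin m) (Fin n) ℝ)} :
      L.Perm L' → SatisfiesH L → SatisfiesH L'
  | split (t₁ t₂ : ℝ) (Y₁ Y₂ : Matrix (Fin m) (Fin n) ℝ)
      (L : List (ℝ × Matrix (Fin m) (Fin n) ℝ)) :
      (Y₁ - Y₂).rank ≤ 1 →
      SatisfiesH ((t₁ + t₂, (t₁ / (t₁ + t₂)) • Y₁ + (t₂ / (t₁ + t₂)) • Y₂) :: L) →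
      SatisfiesH ((t₁, Y₁) :: (t₂, Y₂) :: L)

/-- A prelaminate: a convex combination `Σ λᵢ δ_{Xᵢ}` of Dirac measures such that
`{(λ₁,X₁),…,(λ_N,X_N)}` satisfies the `H_N` condition. -/
def IsPrelaminate {m n : ℕ} (μ : Measure (Matrix (Fin m) (Fin n) ℝ)) : Prop :=
  ∃ L : List (ℝ × Matrix (Fin m) (Fin n) ℝ),
    (∀ p ∈ L, 0 < p.1 ∧ p.1 ≤ 1) ∧ (L.map Prod.fst).sum = 1 ∧ SatisfiesH L ∧
    μ = (L.map fun p => (ENNReal.ofReal p.1) •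
      (Measure.dirac p.2 : Measure (Matrix (Fin m) (Fin n) ℝ))).sum

/-! ### Auxiliary development for the main theorem -/

namespace PrelamAux

open Matrix List
open scoped Classical

abbrev Mat (n : ℕ) := Matrix (Fin 2) (Fin n) ℝ

/-- The measure associated to a weighted list of matrices. -/
def lmeas {n : ℕ} (l : List (ℝ × Mat n)) : Measure (Mat n) :=
  (l.map fun p => (ENNReal.ofReal p.1) • (Measure.dirac p.2 : Measure (Mat n))).sum

/-- Total weight of a list. -/
def W {n : ℕ} (l : List (ℝ × Mat n)) : ℝ := (l.map Prod.fst).sum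

/-- Weighted (unnormalised) sum of a list of matrices. -/
def wsum {n : ℕ} (l : List (ℝ × Mat n)) : Mat n := (l.map fun q => q.1 • q.2).sum

/-- Weighted average. -/
def avg {n : ℕ} (l : List (ℝ × Mat n)) : Mat n := (W l)⁻¹ • wsum l

/-- Fiber weight (with respect to `Pdiag`). -/
def fib {n : ℕ} (l : List (ℝ × Mat n)) (x : Mat n) : ℝ :=
  (l.map fun p => if Pdiag n p.2 = x then p.1 else 0).sum

/-- Atomic weight of a list at a point. -/
def fib₂ {n : ℕ} (l : List (ℝ × Mat n)) (x : Mat n) : ℝ :=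
  (l.map fun p => if p.2 = x then p.1 else 0).sum

instance {m k : ℕ} : MeasurableSingletonClass (Matrix (Fin m) (Fin k) ℝ) :=
  show MeasurableSingletonClass (Fin m → Fin k → ℝ) from inferInstance

variable {n : ℕ}

lemma W_nil : W ([] : List (ℝ × Mat n)) = 0 := rfl

lemma W_cons (q : ℝ × Mat n) (l : List (ℝ × Mat n)) : W (q :: l) = q.1 + W l := by
  simp [W]

lemma W_append (l₁ l₂ : List (ℝ × Mat n)) : W (l₁ ++ l₂) = W l₁ + W l₂ := by
  simp [W]

lemma W_nonneg {l : List (ℝ × Mat n)} (h : ∀ q ∈ l, 0 ≤ q.1) : 0 ≤ W l := by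
  apply List.sum_nonneg
  intro x hx
  obtain ⟨q, hq, rfl⟩ := List.mem_map.1 hx
  exact h q hq

lemma W_pos {l : List (ℝ × Mat n)} (hl : l ≠ []) (h : ∀ q ∈ l, 0 < q.1) : 0 < W l := by
  cases l with
  | nil => exact absurd rfl hl
  | cons q l =>
    rw [W_cons]
    have := W_nonneg (l := l) (fun q hq => (h q (List.mem_cons_of_mem _ hq)).le)
    have := h q (List.mem_cons_self)
    linarith

lemma fib_nonneg {l : List (ℝ × Mat n)} (h : ∀ q ∈ l, 0 ≤ q.1) (x : Mat n) : 0 ≤ fib l x := by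
  apply List.sum_nonneg
  intro y hy
  obtain ⟨q, hq, rfl⟩ := List.mem_map.1 hy
  split_ifs
  · exact h q hq
  · exact le_refl 0

lemma fib₂_nonneg {l : List (ℝ × Mat n)} (h : ∀ q ∈ l, 0 ≤ q.1) (x : Mat n) : 0 ≤ fib₂ l x := by
  apply List.sum_nonneg
  intro y hy
  obtain ⟨q, hq, rfl⟩ := List.mem_map.1 hy
  split_ifs
  · exact h q hq
  · exact le_refl 0

lemma fib_cons (q : ℝ × Mat n) (l : List (ℝ × Mat n)) (x : Mat n) :
    fib (q :: l) x = (if Pdiag n q.2 = x then q.1 else 0) + fib l x := by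
  simp [fib]

lemma fib₂_cons (q : ℝ × Mat n) (l : List (ℝ × Mat n)) (x : Mat n) :
    fib₂ (q :: l) x = (if q.2 = x then q.1 else 0) + fib₂ l x := by
  simp [fib₂]

/-! #### Linearity of `Pdiag` -/

lemma Pdiag_add (X Y : Mat n) : Pdiag n (X + Y) = Pdiag n X + Pdiag n Y := by
  ext i j
  simp only [Pdiag, Matrix.of_apply, Matrix.add_apply]
  split_ifs <;> simp

lemma Pdiag_smul (c : ℝ) (X : Mat n) : Pdiag n (c • X) = c • Pdiag n X := by
  ext i j
  simp only [Pdiag, Matrix.of_apply, Matrix.smul_apply, smul_eq_mul]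
  split_ifs <;> simp

lemma Pdiag_sub (X Y : Mat n) : Pdiag n (X - Y) = Pdiag n X - Pdiag n Y := by
  ext i j
  simp only [Pdiag, Matrix.of_apply, Matrix.sub_apply]
  split_ifs <;> simp

/-! #### Rank lemmas -/

lemma rank_vecMulVec_le {m k : ℕ} (w : Fin m → ℝ) (v : Fin k → ℝ) :
    (Matrix.vecMulVec w v).rank ≤ 1 := by
  rw [Matrix.vecMulVec_eq (Fin 1)]
  exact (Matrix.rank_mul_le_left _ _).trans
    ((Matrix.rank_le_card_width _).trans (by simp))

lemma rank_smul_le {m k : ℕ} (c : ℝ) (A : Matrix (Fin m) (Fin k) ℝ) :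
    (c • A).rank ≤ A.rank := by
  apply Submodule.finrank_mono
  rintro x ⟨v, rfl⟩
  refine ⟨c • v, ?_⟩
  simp only [Matrix.mulVecLin_apply]
  rw [Matrix.mulVec_smul, Matrix.smul_mulVec]

lemma two_le_rank {m k : ℕ} (A : Matrix (Fin m) (Fin k) ℝ) (v : Fin 2 → (Fin m → ℝ))
    (hv : ∀ i, v i ∈ LinearMap.range A.mulVecLin) (h : LinearIndependent ℝ v) :
    2 ≤ A.rank := by
  have h1 : Submodule.span ℝ (Set.range v) ≤ LinearMap.range A.mulVecLin :=
    Submodule.span_le.2 (by rintro _ ⟨i, rfl⟩; exact hv i)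
  have h2 := finrank_span_eq_card h
  calc (2 : ℕ) = Fintype.card (Fin 2) := by simp
    _ = Module.finrank ℝ (Submodule.span ℝ (Set.range v)) := h2.symm
    _ ≤ A.rank := Submodule.finrank_mono h1

lemma rank_lift (hn : 1 ≤ n) {A B : Mat n} (hA : A ∈ Mtri n) (hB : B ∈ Mtri n)
    (h : (Pdiag n A - Pdiag n B).rank ≤ 1) : (A - B).rank ≤ 1 := by
  set D := A - B with hD
  have hrow : ∀ j : Fin n, (j : ℕ) + 1 < n → D 1 j = 0 := by
    intro j hj
    simp [hD, Matrix.sub_apply, hA j hj, hB j hj]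
  have hlast : (n - 1 : ℕ) < n := by omega
  set last : Fin n := ⟨n - 1, hlast⟩ with hlastdef
  have hlastval : (last : ℕ) + 1 = n := by
    simp [hlastdef]; omega
  have hjcase : ∀ j : Fin n, (j : ℕ) + 1 < n ∨ j = last := by
    intro j
    rcases Nat.lt_or_ge ((j : ℕ) + 1) n with h' | h'
    · exact Or.inl h'
    · right
      have := j.2
      apply Fin.ext
      simp [hlastdef]; omega
  rw [← Pdiag_sub, ← hD] at h
  by_cases hc : D 1 last = 0
  · -- second row of D is zero
    have hrow1 : ∀ j, D 1 j = 0 := by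
      intro j
      rcases hjcase j with h' | rfl
      · exact hrow j h'
      · exact hc
    have hDeq : D = Matrix.vecMulVec (fun i => if i = 0 then (1 : ℝ) else 0) (D 0) := by
      ext i j
      fin_cases i
      · simp [Matrix.vecMulVec_apply]
      · simp [Matrix.vecMulVec_apply, hrow1 j]
    rw [hDeq]
    exact rank_vecMulVec_le _ _
  · -- all columns of D except the last are zero
    have hv : ∀ j : Fin n, (j : ℕ) + 1 < n → D 0 j = 0 := by
      intro j hj
      by_contra hne
      set E := Pdiag n D with hE
      have hone : ¬((1 : Fin 2) = 0) := by decide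
      have hEdef : ∀ (i : Fin 2) (j' : Fin n), E i j' =
          if i = 0 then (if (j' : ℕ) + 1 < n then D 0 j' else 0)
          else (if (j' : ℕ) + 1 = n then D 1 j' else 0) := fun i j' => rfl
      have hE0j : E 0 j = D 0 j := by rw [hEdef, if_pos rfl, if_pos hj]
      have hE1j : E 1 j = 0 := by
        rw [hEdef, if_neg hone, if_neg (by omega)]
      have hE0l : E 0 last = 0 := by
        rw [hEdef, if_pos rfl, if_neg (by omega)]
      have hE1l : E 1 last = D 1 last := by
        rw [hEdef, if_neg hone, if_pos hlastval]
      have hcol1 : E.mulVec (Pi.single j 1) ∈ LinearMap.range E.mulVecLin :=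
        ⟨Pi.single j 1, rfl⟩
      have hcol2 : E.mulVec (Pi.single last 1) ∈ LinearMap.range E.mulVecLin :=
        ⟨Pi.single last 1, rfl⟩
      have hval1 : E.mulVec (Pi.single j 1) = fun i => E i j := by
        rw [Matrix.mulVec_single]; funext i; exact mul_one _
      have hval2 : E.mulVec (Pi.single last 1) = fun i => E i last := by
        rw [Matrix.mulVec_single]; funext i; exact mul_one _
      have hind : LinearIndependent ℝ ![E.mulVec (Pi.single j 1), E.mulVec (Pi.single last 1)] := by
        rw [LinearIndependent.pair_iff]
        intro s t hst
        rw [hval1, hval2] at hst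
        have h0 := congrFun hst 0
        have h1 := congrFun hst 1
        simp only [Pi.add_apply, Pi.smul_apply, smul_eq_mul, Pi.zero_apply] at h0 h1
        rw [hE0j, hE0l] at h0
        rw [hE1j, hE1l] at h1
        constructor
        · have : s * D 0 j = 0 := by linarith
          rcases mul_eq_zero.1 this with h' | h'
          · exact h'
          · exact absurd h' hne
        · have : t * D 1 last = 0 := by linarith
          rcases mul_eq_zero.1 this with h' | h'
          · exact h'
          · exact absurd h' hc
      have := two_le_rank E _ (fun i => by fin_cases i <;> assumption) hind
      omega
    have hDeq : D = Matrix.vecMulVec (fun i => D i last)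
        (fun j => if j = last then (1 : ℝ) else 0) := by
      ext i j
      rcases hjcase j with h' | rfl
      · have hjne : j ≠ last := by
          intro hcon
          rw [hcon] at h'
          omega
        rw [Matrix.vecMulVec_apply]
        rw [if_neg hjne, mul_zero]
        fin_cases i
        · exact hv j h'
        · exact hrow j h'
      · rw [Matrix.vecMulVec_apply, if_pos rfl, mul_one]
    rw [hDeq]
    exact rank_vecMulVec_le _ _

/-! #### Rank-one convex sets -/

/-- A convex set in which all differences have rank at most one. -/
def RCset (T : Set (Mat n)) : Prop :=
  (∀ A ∈ T, ∀ B ∈ T, (A - B).rank ≤ 1) ∧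
  (∀ A ∈ T, ∀ B ∈ T, ∀ s : ℝ, 0 ≤ s → s ≤ 1 → s • A + (1 - s) • B ∈ T)

lemma avg_singleton {q : ℝ × Mat n} (hq : q.1 ≠ 0) : avg [q] = q.2 := by
  simp only [avg, wsum, W, List.map_cons, List.map_nil, List.sum_cons, List.sum_nil,
    add_zero]
  rw [smul_smul, inv_mul_cancel₀ hq, one_smul]

lemma avg_cons {q : ℝ × Mat n} {rest : List (ℝ × Mat n)} (hr : rest ≠ [])
    (hq : 0 < q.1) (hrest : ∀ p ∈ rest, 0 < p.1) :
    avg (q :: rest) = (q.1 / W (q :: rest)) • q.2 + (W rest / W (q :: rest)) • avg rest := by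
  have h1 : 0 < W rest := W_pos hr hrest
  have h2 : W (q :: rest) = q.1 + W rest := W_cons _ _
  have hS : 0 < W (q :: rest) := by rw [h2]; linarith
  have h3 : wsum (q :: rest) = q.1 • q.2 + wsum rest := by simp [wsum]
  have hSne : W (q :: rest) ≠ 0 := hS.ne'
  have hWrne : W rest ≠ 0 := h1.ne'
  rw [avg, avg, h3, smul_add, smul_smul, smul_smul]
  congr 1
  · rw [div_eq_inv_mul]
  · congr 1
    field_simp

lemma avg_mem {T : Set (Mat n)} (hT : RCset T) :
    ∀ l : List (ℝ × Mat n), l ≠ [] → (∀ q ∈ l, 0 < q.1 ∧ q.2 ∈ T) → avg l ∈ T := by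
  intro l
  induction l with
  | nil => intro h; exact absurd rfl h
  | cons q rest ih =>
    intro _ h
    rcases eq_or_ne rest [] with rfl | hr
    · rw [avg_singleton (h q (List.mem_cons_self)).1.ne']
      exact (h q (List.mem_cons_self)).2
    · have hrest : ∀ p ∈ rest, 0 < p.1 ∧ p.2 ∈ T :=
        fun p hp => h p (List.mem_cons_of_mem _ hp)
      have hmem : avg rest ∈ T := ih hr hrest
      have hq := h q (List.mem_cons_self)
      have h1 : 0 < W rest := W_pos hr (fun p hp => (hrest p hp).1)
      have h2 : W (q :: rest) = q.1 + W rest := W_cons _ _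
      have hS : 0 < W (q :: rest) := by rw [h2]; linarith [hq.1]
      rw [avg_cons hr hq.1 (fun p hp => (hrest p hp).1)]
      have hcoef : W rest / W (q :: rest) = 1 - q.1 / W (q :: rest) := by
        field_simp
        linarith [h2]
      rw [hcoef]
      exact hT.2 _ hq.2 _ hmem _ (div_nonneg hq.1.le hS.le) (by rw [div_le_one hS]; linarith)

lemma satisfiesH_aux {T : Set (Mat n)} (hT : RCset T) :
    ∀ (M : List (ℝ × Mat n)) (p q : ℝ × Mat n),
      (∀ r ∈ p :: q :: M, 0 < r.1 ∧ r.2 ∈ T) → SatisfiesH (p :: q :: M) := by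
  intro M
  induction M with
  | nil =>
    intro p q h
    exact SatisfiesH.base p.1 q.1 p.2 q.2
      (hT.1 _ (h p (by simp)).2 _ (h q (by simp)).2)
  | cons r M ih =>
    intro p q h
    have hp := h p (by simp)
    have hq := h q (by simp)
    have hS : 0 < p.1 + q.1 := by linarith [hp.1, hq.1]
    have hcoef : q.1 / (p.1 + q.1) = 1 - p.1 / (p.1 + q.1) := by field_simp; ring
    have hmem : ((p.1 / (p.1 + q.1)) • p.2 + (q.1 / (p.1 + q.1)) • q.2) ∈ T := by
      rw [hcoef]
      exact hT.2 _ hp.2 _ hq.2 _ (div_nonneg hp.1.le hS.le) (by rw [div_le_one hS]; linarith [hq.1])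
    have hall : ∀ x ∈ (p.1 + q.1, (p.1 / (p.1 + q.1)) • p.2 + (q.1 / (p.1 + q.1)) • q.2)
        :: r :: M, 0 < x.1 ∧ x.2 ∈ T := by
      intro x hx
      rcases List.mem_cons.1 hx with rfl | hx
      · exact ⟨hS, hmem⟩
      · exact h x (List.mem_cons_of_mem _ (List.mem_cons_of_mem _ hx))
    have := ih (p.1 + q.1, (p.1 / (p.1 + q.1)) • p.2 + (q.1 / (p.1 + q.1)) • q.2) r hall
    exact SatisfiesH.split p.1 q.1 p.2 q.2 (r :: M)
      (hT.1 _ hp.2 _ hq.2) this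

lemma satisfiesH_of_RCset {T : Set (Mat n)} (hT : RCset T) (M : List (ℝ × Mat n))
    (hlen : 2 ≤ M.length) (h : ∀ r ∈ M, 0 < r.1 ∧ r.2 ∈ T) : SatisfiesH M := by
  match M with
  | [] => simp at hlen
  | [p] => simp at hlen
  | p :: q :: M => exact satisfiesH_aux hT M p q h

lemma satisfiesH_expand {T : Set (Mat n)} (hT : RCset T) :
    ∀ (blk : List (ℝ × Mat n)), blk ≠ [] → (∀ q ∈ blk, 0 < q.1 ∧ q.2 ∈ T) →
      ∀ K : List (ℝ × Mat n), SatisfiesH ((W blk, avg blk) :: K) → SatisfiesH (blk ++ K) := by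
  intro blk
  induction blk with
  | nil => intro h; exact absurd rfl h
  | cons q rest ih =>
    intro _ h K hH
    have hq := h q (List.mem_cons_self)
    rcases eq_or_ne rest [] with rfl | hr
    · rw [avg_singleton hq.1.ne'] at hH
      have hW : W [q] = q.1 := by simp [W]
      rw [hW] at hH
      simpa using hH
    · have hrest : ∀ p ∈ rest, 0 < p.1 ∧ p.2 ∈ T :=
        fun p hp => h p (List.mem_cons_of_mem _ hp)
      have havg : avg rest ∈ T := avg_mem hT rest hr hrest
      have hWr : 0 < W rest := W_pos hr (fun p hp => (hrest p hp).1)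
      have hWS : W (q :: rest) = q.1 + W rest := W_cons _ _
      have hkey : SatisfiesH ((q.1, q.2) :: (W rest, avg rest) :: K) := by
        apply SatisfiesH.split q.1 (W rest) q.2 (avg rest) K
          (hT.1 _ hq.2 _ havg)
        have : (q.1 / (q.1 + W rest)) • q.2 + (W rest / (q.1 + W rest)) • avg rest
            = avg (q :: rest) := by
          rw [avg_cons hr hq.1 (fun p hp => (hrest p hp).1), hWS]
        rw [this, ← hWS]
        exact hH
      have hswap : SatisfiesH ((W rest, avg rest) :: (q.1, q.2) :: K) :=
        SatisfiesH.perm (List.Perm.swap _ _ _) hkey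
      have hexp := ih hr hrest ((q.1, q.2) :: K) hswap
      exact SatisfiesH.perm List.perm_middle hexp

/-! #### Permutation lifting -/

lemma forall2_perm_lift {α β : Type*} {R : α → β → Prop} :
    ∀ {l l' : List β}, l.Perm l' → ∀ {m : List α}, List.Forall₂ R m l' →
      ∃ m' : List α, m'.Perm m ∧ List.Forall₂ R m' l := by
  intro l l' h
  induction h with
  | nil =>
    intro m hm
    cases hm
    exact ⟨[], List.Perm.refl _, List.Forall₂.nil⟩
  | cons x _ ih =>
    intro m hm
    cases hm with
    | cons hx hm' =>
      obtain ⟨m'', hp, hf⟩ := ih hm'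
      exact ⟨_ :: m'', hp.cons _, List.Forall₂.cons hx hf⟩
  | swap x y l =>
    intro m hm
    cases hm with
    | cons hx hm' =>
      cases hm' with
      | cons hy hm'' =>
        exact ⟨_ :: _ :: _, List.Perm.swap _ _ _, List.Forall₂.cons hy (List.Forall₂.cons hx hm'')⟩
  | trans _ _ ih1 ih2 =>
    intro m hm
    obtain ⟨m₂, hp₂, hf₂⟩ := ih2 hm
    obtain ⟨m₁, hp₁, hf₁⟩ := ih1 hf₂
    exact ⟨m₁, hp₁.trans hp₂, hf₁⟩

lemma perm_flatten {α : Type*} : ∀ {l l' : List (List α)}, l.Perm l' →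
    l.flatten.Perm l'.flatten := by
  intro l l' h
  induction h with
  | nil => exact List.Perm.refl _
  | cons x _ ih => simpa using ih.append_left x
  | swap x y l =>
    simp only [List.flatten_cons]
    rw [← List.append_assoc, ← List.append_assoc]
    exact (List.perm_append_comm).append_right _
  | trans _ _ ih1 ih2 => exact ih1.trans ih2

/-! #### Sum helper lemmas -/

lemma sum_map_smul_const (l : List (ℝ × Mat n)) (Z : Mat n) :
    (l.map fun q => q.1 • Z).sum = (W l) • Z := by
  induction l with
  | nil => simp [W]
  | cons q l ih => simp [W_cons, ih, add_smul]

lemma Pdiag_wsum (l : List (ℝ × Mat n)) :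
    Pdiag n (wsum l) = (l.map fun q => q.1 • Pdiag n q.2).sum := by
  induction l with
  | nil =>
    simp only [wsum, List.map_nil, List.sum_nil]
    ext i j
    simp only [Pdiag, Matrix.of_apply, Matrix.zero_apply]
    split_ifs <;> simp
  | cons q l ih =>
    simp only [wsum, List.map_cons, List.sum_cons] at *
    rw [Pdiag_add, Pdiag_smul, ih]

/-! #### The good set associated to a rank-one pair -/

def Tset (Y₁ Y₂ : Mat n) : Set (Mat n) :=
  {A : Mat n | A ∈ Mtri n ∧ ∃ s : ℝ, Pdiag n A = s • Y₁ + (1 - s) • Y₂}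

lemma Mtri_combo {A B : Mat n} (hA : A ∈ Mtri n) (hB : B ∈ Mtri n) (a b : ℝ) :
    a • A + b • B ∈ Mtri n := by
  intro j hj
  simp [Matrix.add_apply, Matrix.smul_apply, hA j hj, hB j hj]

lemma T_good (hn : 1 ≤ n) {Y₁ Y₂ : Mat n} (hrank : (Y₁ - Y₂).rank ≤ 1) :
    RCset (Tset Y₁ Y₂) := by
  constructor
  · rintro A ⟨hA, s, hs⟩ B ⟨hB, s', hs'⟩
    apply rank_lift hn hA hB
    have heq : Pdiag n A - Pdiag n B = (s - s') • (Y₁ - Y₂) := by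
      rw [hs, hs']
      module
    rw [heq]
    exact (rank_smul_le _ _).trans hrank
  · rintro A ⟨hA, s, hs⟩ B ⟨hB, s', hs'⟩ t ht0 ht1
    refine ⟨Mtri_combo hA hB t (1 - t), t * s + (1 - t) * s', ?_⟩
    rw [Pdiag_add, Pdiag_smul, Pdiag_smul, hs, hs']
    module

/-! #### The main lifting lemma -/

/-- The matching condition between a block of lifted matrices and an entry of the
projected list. -/
def blkOK (n : ℕ) (blk : List (ℝ × Mat n)) (p : ℝ × Mat n) : Prop :=
  blk ≠ [] ∧ W blk = p.1 ∧ ∀ q ∈ blk, 0 < q.1 ∧ q.2 ∈ Mtri n ∧ Pdiag n q.2 = p.2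

lemma main_lift (hn : 1 ≤ n) {L₂ : List (ℝ × Mat n)} (h : SatisfiesH L₂) :
    ∀ (MM : List (List (ℝ × Mat n))) (M : List (ℝ × Mat n)),
      List.Forall₂ (blkOK n) MM L₂ → M.Perm MM.flatten → SatisfiesH M := by
  induction h with
  | base t₁ t₂ Y₁ Y₂ hrank =>
    intro MM M hF hperm
    cases hF with
    | cons h₁ hF' =>
      rename_i B₁ MM₁
      cases hF' with
      | cons h₂ hF'' =>
        rename_i B₂ MM₂
        cases hF''
        obtain ⟨hB₁ne, hB₁W, hB₁q⟩ := h₁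
        obtain ⟨hB₂ne, hB₂W, hB₂q⟩ := h₂
        have hT := T_good hn hrank
        apply SatisfiesH.perm hperm.symm
        apply satisfiesH_of_RCset hT
        · simp only [List.flatten_cons, List.flatten_nil, List.append_nil, List.length_append]
          have h1 : 1 ≤ B₁.length := List.length_pos_iff.2 hB₁ne
          have h2 : 1 ≤ B₂.length := List.length_pos_iff.2 hB₂ne
          omega
        · intro r hr
          simp only [List.flatten_cons, List.flatten_nil, List.append_nil,
            List.mem_append] at hr
          rcases hr with hr | hr
          · obtain ⟨hpos, htri', hP'⟩ := hB₁q r hr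
            exact ⟨hpos, htri', 1, by rw [hP']; module⟩
          · obtain ⟨hpos, htri', hP'⟩ := hB₂q r hr
            exact ⟨hpos, htri', 0, by rw [hP']; module⟩
  | perm hp _ ih =>
    intro MM M hF hperm
    obtain ⟨MM', hp', hF'⟩ := forall2_perm_lift hp hF
    exact ih MM' M hF' (hperm.trans (perm_flatten hp').symm)
  | split t₁ t₂ Y₁ Y₂ K hrank _ ih =>
    intro MM M hF hperm
    cases hF with
    | cons h₁ hF' =>
      rename_i B₁ MM₁
      cases hF' with
      | cons h₂ hF₀ =>
        rename_i B₂ MM₀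
        obtain ⟨hB₁ne, hB₁W, hB₁q⟩ := h₁
        obtain ⟨hB₂ne, hB₂W, hB₂q⟩ := h₂
        set blk := B₁ ++ B₂ with hblk
        have hblkne : blk ≠ [] := by
          simp [hblk, hB₁ne]
        have hT := T_good hn hrank
        have hatoms : ∀ q ∈ blk, 0 < q.1 ∧ q.2 ∈ Tset Y₁ Y₂ := by
          intro q hq
          rcases List.mem_append.1 hq with hq | hq
          · obtain ⟨hpos, htri', hP'⟩ := hB₁q q hq
            exact ⟨hpos, htri', 1, by rw [hP']; module⟩
          · obtain ⟨hpos, htri', hP'⟩ := hB₂q q hq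
            exact ⟨hpos, htri', 0, by rw [hP']; module⟩
        have hWblk : W blk = t₁ + t₂ := by
          rw [hblk, W_append, hB₁W, hB₂W]
        have hWpos : 0 < W blk := W_pos hblkne (fun q hq => (hatoms q hq).1)
        set C := avg blk with hC
        have hCT : C ∈ Tset Y₁ Y₂ := avg_mem hT blk hblkne hatoms
        have hPC : Pdiag n C = (t₁ / (t₁ + t₂)) • Y₁ + (t₂ / (t₁ + t₂)) • Y₂ := by
          rw [hC, avg, Pdiag_smul, Pdiag_wsum]
          have hm1 : B₁.map (fun q => q.1 • Pdiag n q.2) = B₁.map (fun q => q.1 • Y₁) :=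
            List.map_congr_left (fun q hq => by rw [(hB₁q q hq).2.2])
          have hm2 : B₂.map (fun q => q.1 • Pdiag n q.2) = B₂.map (fun q => q.1 • Y₂) :=
            List.map_congr_left (fun q hq => by rw [(hB₂q q hq).2.2])
          rw [hblk, List.map_append, List.sum_append, hm1, hm2,
            sum_map_smul_const, sum_map_smul_const, hB₁W, hB₂W]
          rw [← hblk, hWblk]
          rw [smul_add, smul_smul, smul_smul, div_eq_inv_mul, div_eq_inv_mul]
        have hstep : SatisfiesH ((W blk, C) :: MM₀.flatten) := by
          apply ih ([(W blk, C)] :: MM₀) _ (List.Forall₂.cons ?_ hF₀) ?_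
          · refine ⟨by simp, ?_, ?_⟩
            · show W [(W blk, C)] = t₁ + t₂
              rw [← hWblk]
              simp [W]
            · intro q hq
              simp only [List.mem_singleton] at hq
              subst hq
              exact ⟨hWpos, hCT.1, hPC⟩
          · simp only [List.flatten_cons, List.singleton_append]
            exact List.Perm.refl _
        have hexp := satisfiesH_expand hT blk hblkne hatoms MM₀.flatten hstep
        have h5 : (blk ++ MM₀.flatten).Perm M := by
          apply List.Perm.symm
          calc M.Perm (B₁ :: B₂ :: MM₀).flatten := hperm
            _ = blk ++ MM₀.flatten := by
              simp [hblk, List.flatten_cons, List.append_assoc]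
        exact SatisfiesH.perm h5 hexp

/-! #### Measure computations -/

lemma lmeas_nil : lmeas ([] : List (ℝ × Mat n)) = 0 := rfl

lemma lmeas_cons (q : ℝ × Mat n) (l : List (ℝ × Mat n)) :
    lmeas (q :: l) = (ENNReal.ofReal q.1) • (Measure.dirac q.2 : Measure (Mat n)) + lmeas l := by
  simp [lmeas]

lemma lmeas_append (l₁ l₂ : List (ℝ × Mat n)) :
    lmeas (l₁ ++ l₂) = lmeas l₁ + lmeas l₂ := by
  simp [lmeas]

lemma measurable_Pdiag : Measurable (Pdiag n) := by
  apply measurable_pi_lambda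
  intro i
  apply measurable_pi_lambda
  intro j
  show Measurable fun X : Mat n => Pdiag n X i j
  simp only [Pdiag, Matrix.of_apply]
  split_ifs
  · exact (measurable_pi_apply _).comp (measurable_pi_apply _)
  · exact measurable_const
  · exact (measurable_pi_apply _).comp (measurable_pi_apply _)
  · exact measurable_const

lemma map_lmeas (l : List (ℝ × Mat n)) :
    (lmeas l).map (Pdiag n) = lmeas (l.map fun p => (p.1, Pdiag n p.2)) := by
  induction l with
  | nil => simp [lmeas, Measure.map_zero]
  | cons p l ih =>
    rw [lmeas_cons, Measure.map_add _ _ measurable_Pdiag, ih, List.map_cons, lmeas_cons,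
      Measure.map_smul, Measure.map_dirac' measurable_Pdiag]

lemma lmeas_apply_singleton (l : List (ℝ × Mat n)) (h : ∀ p ∈ l, 0 ≤ p.1) (x : Mat n) :
    lmeas l {x} = ENNReal.ofReal (fib₂ l x) := by
  induction l with
  | nil => simp [lmeas, fib₂]
  | cons p l ih =>
    have hp := h p (List.mem_cons_self)
    have hl : ∀ q ∈ l, 0 ≤ q.1 := fun q hq => h q (List.mem_cons_of_mem _ hq)
    rw [lmeas_cons, fib₂_cons]
    rw [Measure.coe_add, Pi.add_apply, ih hl]
    rw [ENNReal.ofReal_add (by split_ifs <;> simp [hp]) (fib₂_nonneg hl x)]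
    congr 1
    rw [Measure.smul_apply, Measure.dirac_apply' _ (measurableSet_singleton x)]
    by_cases hpx : p.2 = x
    · rw [if_pos hpx]
      rw [Set.indicator_of_mem (by simp [hpx]) 1]
      simp
    · rw [if_neg hpx]
      rw [Set.indicator_of_notMem (by simp [hpx]) 1]
      simp

/-! #### Extraction and coupling -/

lemma extract :
    ∀ (L : List (ℝ × Mat n)) (y : Mat n) (t : ℝ), 0 < t →
      (∀ p ∈ L, 0 < p.1 ∧ p.2 ∈ Mtri n) →
      t ≤ fib L y →
      ∃ blk rest : List (ℝ × Mat n),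
        blk ≠ [] ∧ (∀ q ∈ blk, 0 < q.1 ∧ q.2 ∈ Mtri n ∧ Pdiag n q.2 = y) ∧ W blk = t ∧
        (∀ p ∈ rest, 0 < p.1 ∧ p.2 ∈ Mtri n) ∧
        lmeas L = lmeas blk + lmeas rest ∧
        ∀ x, fib rest x = fib L x - (if x = y then t else 0) := by
  intro L
  induction L with
  | nil =>
    intro y t ht _ hle
    exfalso
    have hz : fib ([] : List (ℝ × Mat n)) y = 0 := by simp [fib]
    rw [hz] at hle
    linarith
  | cons q L' ih =>
    intro y t ht hL hle
    have hq := hL q (List.mem_cons_self)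
    have hL' : ∀ p ∈ L', 0 < p.1 ∧ p.2 ∈ Mtri n :=
      fun p hp => hL p (List.mem_cons_of_mem _ hp)
    by_cases hqy : Pdiag n q.2 = y
    · rw [fib_cons, if_pos hqy] at hle
      rcases lt_trichotomy t q.1 with hlt | heq | hgt
      · -- split the first atom
        refine ⟨[(t, q.2)], (q.1 - t, q.2) :: L', by simp, ?_, by simp [W], ?_, ?_, ?_⟩
        · intro r hr
          simp only [List.mem_singleton] at hr
          subst hr
          exact ⟨ht, hq.2, hqy⟩
        · intro p hp
          rcases List.mem_cons.1 hp with rfl | hp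
          · exact ⟨sub_pos.2 hlt, hq.2⟩
          · exact hL' p hp
        · rw [lmeas_cons, lmeas_cons, lmeas_cons, lmeas_nil, add_zero, ← add_assoc]
          congr 1
          show ENNReal.ofReal q.1 • (Measure.dirac q.2 : Measure (Mat n))
            = ENNReal.ofReal t • Measure.dirac q.2 + ENNReal.ofReal (q.1 - t) • Measure.dirac q.2
          rw [← add_smul, ← ENNReal.ofReal_add ht.le (sub_nonneg.2 hlt.le)]
          congr 2
          ring
        · intro x
          rw [fib_cons, fib_cons]
          by_cases hx : x = y
          · subst hx
            rw [if_pos hqy, if_pos hqy, if_pos rfl]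
            ring
          · have : Pdiag n q.2 ≠ x := by rw [hqy]; exact fun hc => hx hc.symm
            rw [if_neg this, if_neg this, if_neg hx]
            ring
      · -- take the whole first atom
        subst heq
        refine ⟨[q], L', by simp, ?_, by simp [W], hL', by rw [lmeas_cons, lmeas_cons, lmeas_nil, add_zero], ?_⟩
        · intro r hr
          simp only [List.mem_singleton] at hr
          subst hr
          exact ⟨hq.1, hq.2, hqy⟩
        · intro x
          rw [fib_cons]
          by_cases hx : x = y
          · subst hx
            rw [if_pos hqy, if_pos rfl]
            ring
          · have : Pdiag n q.2 ≠ x := by rw [hqy]; exact fun hc => hx hc.symm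
            rw [if_neg this, if_neg hx]
            ring
      · -- recurse
        obtain ⟨blk', rest', hbne, hbq, hbW, hrq, hrm, hrf⟩ :=
          ih y (t - q.1) (by linarith) hL' (by linarith)
        refine ⟨q :: blk', rest', by simp, ?_, ?_, hrq, ?_, ?_⟩
        · intro r hr
          rcases List.mem_cons.1 hr with rfl | hr
          · exact ⟨hq.1, hq.2, hqy⟩
          · exact hbq r hr
        · rw [W_cons, hbW]; ring
        · rw [lmeas_cons, lmeas_cons, hrm, add_assoc]
        · intro x
          rw [hrf x, fib_cons]
          by_cases hx : x = y
          · subst hx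
            rw [if_pos hqy, if_pos rfl, if_pos rfl]
            ring
          · have : Pdiag n q.2 ≠ x := by rw [hqy]; exact fun hc => hx hc.symm
            rw [if_neg this, if_neg hx, if_neg hx]
            ring
    · -- first atom not in the fiber: recurse
      rw [fib_cons, if_neg hqy, zero_add] at hle
      obtain ⟨blk', rest', hbne, hbq, hbW, hrq, hrm, hrf⟩ := ih y t ht hL' hle
      refine ⟨blk', q :: rest', hbne, hbq, hbW, ?_, ?_, ?_⟩
      · intro p hp
        rcases List.mem_cons.1 hp with rfl | hp
        · exact hq
        · exact hrq p hp
      · rw [lmeas_cons, lmeas_cons, hrm]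
        rw [add_left_comm]
      · intro x
        rw [fib_cons, fib_cons, hrf x]
        ring

lemma couple :
    ∀ (L₂ L : List (ℝ × Mat n)),
      (∀ p ∈ L, 0 < p.1 ∧ p.2 ∈ Mtri n) → (∀ p ∈ L₂, 0 < p.1) →
      (∀ x, fib L x = fib₂ L₂ x) →
      ∃ MM : List (List (ℝ × Mat n)),
        List.Forall₂ (blkOK n) MM L₂ ∧ lmeas MM.flatten = lmeas L := by
  intro L₂
  induction L₂ with
  | nil =>
    intro L hL _ hfib
    have hLnil : L = [] := by
      cases L with
      | nil => rfl
      | cons q L' =>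
        exfalso
        have h1 := hfib (Pdiag n q.2)
        rw [fib_cons, if_pos rfl] at h1
        have h2 : fib₂ ([] : List (ℝ × Mat n)) (Pdiag n q.2) = 0 := by simp [fib₂]
        rw [h2] at h1
        have h3 : 0 ≤ fib L' (Pdiag n q.2) :=
          fib_nonneg (fun p hp => (hL p (List.mem_cons_of_mem _ hp)).1.le) _
        have h4 := (hL q (List.mem_cons_self)).1
        linarith
    subst hLnil
    exact ⟨[], List.Forall₂.nil, rfl⟩
  | cons p L₂' ih =>
    intro L hL hL₂ hfib
    have hp := hL₂ p (List.mem_cons_self)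
    have hL₂' : ∀ r ∈ L₂', 0 < r.1 := fun r hr => hL₂ r (List.mem_cons_of_mem _ hr)
    have hle : p.1 ≤ fib L p.2 := by
      rw [hfib p.2, fib₂_cons, if_pos rfl]
      have := fib₂_nonneg (l := L₂') (fun r hr => (hL₂' r hr).le) p.2
      linarith
    obtain ⟨blk, rest, hbne, hbq, hbW, hrq, hrm, hrf⟩ := extract L p.2 p.1 hp hL hle
    have hfib' : ∀ x, fib rest x = fib₂ L₂' x := by
      intro x
      rw [hrf x, hfib x, fib₂_cons]
      by_cases hx : x = p.2
      · rw [if_pos hx, if_pos hx.symm]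
        ring
      · rw [if_neg hx, if_neg (fun hc => hx hc.symm)]
        ring
    obtain ⟨MM', hF', hm'⟩ := ih rest hrq hL₂' hfib'
    refine ⟨blk :: MM', List.Forall₂.cons ⟨hbne, hbW, hbq⟩ hF', ?_⟩
    rw [List.flatten_cons, lmeas_append, hm', hrm]

lemma forall2_facts {MM : List (List (ℝ × Mat n))} {L₂ : List (ℝ × Mat n)}
    (hF : List.Forall₂ (blkOK n) MM L₂) :
    (∀ q ∈ MM.flatten, 0 < q.1) ∧ W MM.flatten = W L₂ := by
  induction hF with
  | nil => exact ⟨by simp, rfl⟩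
  | cons hb hF' ih =>
    rename_i blk p MM' L₂'
    constructor
    · intro q hq
      rw [List.flatten_cons, List.mem_append] at hq
      rcases hq with hq | hq
      · exact (hb.2.2 q hq).1
      · exact ih.1 q hq
    · rw [List.flatten_cons, W_append, ih.2, hb.2.1, W_cons]

end PrelamAux

open PrelamAux

/-- If `μ` is a finite convex combination of Dirac measures supported in `M^{2×n}_tri` and
`P_#μ` is a prelaminate, then `μ` is a prelaminate. -/
theorem prelaminate_of_pushforward_prelaminate (n : ℕ) (hn : 2 ≤ n)
    (μ : Measure (Matrix (Fin 2) (Fin n) ℝ))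
    (L : List (ℝ × Matrix (Fin 2) (Fin n) ℝ))
    (hw : ∀ p ∈ L, 0 < p.1 ∧ p.1 ≤ 1)
    (hsum : (L.map Prod.fst).sum = 1)
    (htri : ∀ p ∈ L, p.2 ∈ Mtri n)
    (hμ : μ = (L.map fun p => (ENNReal.ofReal p.1) •
      (Measure.dirac p.2 : Measure (Matrix (Fin 2) (Fin n) ℝ))).sum)
    (hP : IsPrelaminate (μ.map (Pdiag n))) :
    IsPrelaminate μ := by
  classical
  obtain ⟨L₂, hw₂, hsum₂, hH₂, heq₂⟩ := hP
  have hμL : μ = lmeas L := hμ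
  have hmap : μ.map (Pdiag n) = lmeas (L.map fun p => (p.1, Pdiag n p.2)) := by
    rw [hμL]
    exact map_lmeas L
  have heq : lmeas (L.map fun p => (p.1, Pdiag n p.2)) = lmeas L₂ := by
    rw [← hmap]
    exact heq₂
  have hLpos : ∀ p ∈ L, 0 < p.1 ∧ p.2 ∈ Mtri n := fun p hp => ⟨(hw p hp).1, htri p hp⟩
  have hfib : ∀ x, fib L x = fib₂ L₂ x := by
    intro x
    have h1 := congrArg (fun m : Measure (Matrix (Fin 2) (Fin n) ℝ) => m {x}) heq
    rw [lmeas_apply_singleton _ (fun p hp => by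
      obtain ⟨q, hq, rfl⟩ := List.mem_map.1 hp
      exact (hLpos q hq).1.le) x] at h1
    rw [lmeas_apply_singleton _ (fun p hp => (hw₂ p hp).1.le) x] at h1
    have h2 : fib₂ (L.map fun p => (p.1, Pdiag n p.2)) x = fib L x := by
      simp only [fib₂, fib, List.map_map]
      rfl
    rw [h2] at h1
    exact (ENNReal.ofReal_eq_ofReal_iff
      (fib_nonneg (fun p hp => (hLpos p hp).1.le) x)
      (fib₂_nonneg (fun p hp => (hw₂ p hp).1.le) x)).1 h1
  obtain ⟨MM, hF, hmeas⟩ := couple L₂ L hLpos (fun p hp => (hw₂ p hp).1) hfib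
  have hfacts := forall2_facts hF
  have hWsum : W MM.flatten = 1 := by
    rw [hfacts.2]
    exact hsum₂
  refine ⟨MM.flatten, ?_, hWsum, ?_, ?_⟩
  · intro p hp
    refine ⟨hfacts.1 p hp, ?_⟩
    have h1 : p.1 ≤ W MM.flatten := by
      apply List.single_le_sum
      · intro x hx
        obtain ⟨q, hq, rfl⟩ := List.mem_map.1 hx
        exact (hfacts.1 q hq).le
      · exact List.mem_map.2 ⟨p, hp, rfl⟩
    rw [hWsum] at h1
    exact h1
  · exact main_lift (by omega) hH₂ MM MM.flatten hF (List.Perm.refl _)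
  · rw [hμL]
    exact hmeas.symm

end
end

section
/- If h : M^{2×2}_+ → ℝ is quasiconvex on M^{2×2}_+, then its dual function h̃(X) = X₁₂ · h(Ψ(X)) is quasiconvex on M^{2×2}_+. -/
open MeasureTheory

noncomputable section

/-! ### Auxiliary lemmas for the proof -/

private lemma myVecEta (y : Fin 2 → ℝ) : (![y 0, y 1] : Fin 2 → ℝ) = y := by
  funext i; fin_cases i <;> rfl

private lemma myVecDecomp (v : Fin 2 → ℝ) :
    v = v 0 • (Pi.single 0 1 : Fin 2 → ℝ) + v 1 • (Pi.single 1 1 : Fin 2 → ℝ) := by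
  funext i; fin_cases i <;> simp

private lemma myClmApply (T : (Fin 2 → ℝ) →L[ℝ] ℝ) (v : Fin 2 → ℝ) :
    T v = v 0 * T (Pi.single 0 1) + v 1 * T (Pi.single 1 1) := by
  conv_lhs => rw [myVecDecomp v]
  rw [map_add, _root_.map_smul, _root_.map_smul]; simp [smul_eq_mul]

private lemma myClmApplyV (T : (Fin 2 → ℝ) →L[ℝ] (Fin 2 → ℝ)) (v : Fin 2 → ℝ) (i : Fin 2) :
    T v i = v 0 * T (Pi.single 0 1) i + v 1 * T (Pi.single 1 1) i := by
  conv_lhs => rw [myVecDecomp v]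
  rw [map_add, _root_.map_smul, _root_.map_smul]; simp [smul_eq_mul]

private lemma jacobianM_apply (f : (Fin 2 → ℝ) → (Fin 2 → ℝ)) (x : Fin 2 → ℝ) (i j : Fin 2) :
    jacobianM 2 2 f x i j = fderiv ℝ f x (Pi.single j 1) i := rfl

private lemma myCancel1 (a00 a01 x0 x1 : ℝ) (h : a01 ≠ 0) :
    x1 - (a01⁻¹ * (-a00) * x0 + a01⁻¹ * 1 * (a00 * x0 + a01 * x1)) = 0 := by
  field_simp
  ring

private lemma myCancel2 (a00 a01 a10 a11 x0 x1 : ℝ) (h : a01 ≠ 0) :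
    a10 * x0 + a11 * x1 -
      (a01⁻¹ * (-(a00 * a11 - a01 * a10)) * x0 + a01⁻¹ * a11 * (a00 * x0 + a01 * x1)) = 0 := by
  field_simp
  ring

set_option maxHeartbeats 2000000 in
/-- If `h` is quasiconvex on `M^{2×2}_+` then its dual `h̃(X) = X₁₂ · h(Ψ(X))` is
quasiconvex on `M^{2×2}_+`. -/

theorem dualFn_quasiconvexOn (h : Matrix (Fin 2) (Fin 2) ℝ → ℝ)
    (hh : IsQuasiconvexOn Mplus h) :
    IsQuasiconvexOn Mplus (dualFn h) := by
  classical
  intro Ω hΩo hΩne hΩb A φ hφ hφcs hφΩ hmem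
  have hone : ((⊤ : ℕ∞) : WithTop ℕ∞) ≠ 0 := by simp
  set e0 : (Fin 2 → ℝ) := Pi.single 0 1 with he0
  set e1 : (Fin 2 → ℝ) := Pi.single 1 1 with he1
  have hφd : Differentiable ℝ φ := hφ.differentiable hone
  set Dφ : (Fin 2 → ℝ) → ((Fin 2 → ℝ) →L[ℝ] (Fin 2 → ℝ)) := fun x => fderiv ℝ φ x with hDφdef
  have hDφ : ∀ x, HasFDerivAt φ (Dφ x) x := fun x => (hφd x).hasFDerivAt
  have hDφcont : Continuous Dφ := hφ.continuous_fderiv hone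
  set p : (Fin 2 → ℝ) → ℝ := fun x => A 0 1 + Dφ x e1 0 with hpdef
  set q : (Fin 2 → ℝ) → ℝ := fun x => A 0 0 + Dφ x e0 0 with hqdef
  set r : (Fin 2 → ℝ) → ℝ := fun x => A 1 0 + Dφ x e0 1 with hrdef
  set s : (Fin 2 → ℝ) → ℝ := fun x => A 1 1 + Dφ x e1 1 with hsdef
  have hp_pos : ∀ x, 0 < p x := by
    intro x
    have := hmem x
    simpa [Mplus, Matrix.add_apply, jacobianM_apply] using this
  have hpc : Continuous p :=
    continuous_const.add ((continuous_apply (0 : Fin 2)).comp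
      (hDφcont.clm_apply continuous_const))
  have hDφ0 : ∀ x, x ∉ tsupport φ → Dφ x = 0 := by
    intro x hx
    have : x ∉ Function.support (fderiv ℝ φ) := fun hc => hx (support_fderiv_subset ℝ hc)
    simpa [hDφdef] using Function.notMem_support.1 this
  obtain ⟨R, hR0, hKR⟩ : ∃ R, 0 < R ∧ tsupport φ ⊆ Metric.ball 0 R :=
    hφcs.isBounded.subset_ball_lt 0 0
  obtain ⟨x₀, hx₀mem, hx₀min⟩ :=
    (isCompact_closedBall (0 : Fin 2 → ℝ) R).exists_isMinOn
      ⟨0, Metric.mem_closedBall_self hR0.le⟩ hpc.continuousOn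
  set c : ℝ := p x₀ with hcdef
  have hc0 : 0 < c := hp_pos x₀
  have hyb : ∀ x : Fin 2 → ℝ, x ∉ Metric.ball 0 R → p x = A 0 1 := by
    intro x hx
    have : Dφ x = 0 := hDφ0 x fun hc => hx (hKR hc)
    simp [hpdef, this]
  have hybd : ((fun _ => R : Fin 2 → ℝ)) ∉ Metric.ball (0 : Fin 2 → ℝ) R := by
    simp only [Metric.mem_ball, dist_zero_right]
    have : ‖(fun _ => R : Fin 2 → ℝ)‖ = R := by
      simpa [Real.norm_eq_abs, abs_of_pos hR0] using
        (pi_norm_const (R : ℝ) : ‖(fun _ : Fin 2 => R)‖ = ‖R‖)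
    simp [this]
  have hcA : c ≤ A 0 1 := by
    have hmem' : ((fun _ => R : Fin 2 → ℝ)) ∈ Metric.closedBall (0 : Fin 2 → ℝ) R := by
      simp only [Metric.mem_closedBall, dist_zero_right]
      simpa [Real.norm_eq_abs, abs_of_pos hR0] using
        le_of_eq (pi_norm_const (R : ℝ) : ‖(fun _ : Fin 2 => R)‖ = ‖R‖)
    have := hx₀min hmem'
    simpa [hyb _ hybd] using this
  have hA01 : 0 < A 0 1 := lt_of_lt_of_le hc0 hcA
  have hcle : ∀ x, c ≤ p x := by
    intro x
    by_cases hx : x ∈ Metric.closedBall (0 : Fin 2 → ℝ) R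
    · exact hx₀min hx
    · have hxb : x ∉ Metric.ball (0 : Fin 2 → ℝ) R := fun hc => hx (Metric.ball_subset_closedBall hc)
      rw [hyb x hxb]; exact hcA
  set pr0 : (Fin 2 → ℝ) →L[ℝ] ℝ := ContinuousLinearMap.proj 0 with hpr0
  set pr1 : (Fin 2 → ℝ) →L[ℝ] ℝ := ContinuousLinearMap.proj 1 with hpr1
  have hpr0e0 : pr0 e0 = 1 := by simp [hpr0, he0]
  have hpr0e1 : pr0 e1 = 0 := by simp [hpr0, he1, Pi.single_eq_of_ne]
  have hpr1e0 : pr1 e0 = 0 := by simp [hpr1, he0, Pi.single_eq_of_ne]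
  have hpr1e1 : pr1 e1 = 1 := by simp [hpr1, he1]
  set L : (Fin 2 → ℝ) → ((Fin 2 → ℝ) →L[ℝ] ℝ) :=
    fun x => A 0 0 • pr0 + A 0 1 • pr1 + pr0.comp (Dφ x) with hLdef
  set M : (Fin 2 → ℝ) → ((Fin 2 → ℝ) →L[ℝ] ℝ) :=
    fun x => A 1 0 • pr0 + A 1 1 • pr1 + pr1.comp (Dφ x) with hMdef
  set u1 : (Fin 2 → ℝ) → ℝ := fun x => A 0 0 * x 0 + A 0 1 * x 1 + φ x 0 with hu1def
  set u2 : (Fin 2 → ℝ) → ℝ := fun x => A 1 0 * x 0 + A 1 1 * x 1 + φ x 1 with hu2def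
  have hU1 : ∀ x, HasFDerivAt u1 (L x) x := by
    intro x
    exact (((hasFDerivAt_apply (0 : Fin 2) x).const_mul (A 0 0)).add
      ((hasFDerivAt_apply (1 : Fin 2) x).const_mul (A 0 1))).add
      (pr0.hasFDerivAt.comp x (hDφ x))
  have hU2 : ∀ x, HasFDerivAt u2 (M x) x := by
    intro x
    exact (((hasFDerivAt_apply (0 : Fin 2) x).const_mul (A 1 0)).add
      ((hasFDerivAt_apply (1 : Fin 2) x).const_mul (A 1 1))).add
      (pr1.hasFDerivAt.comp x (hDφ x))
  have hLe0 : ∀ x, L x e0 = q x := by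
    intro x
    simp [hLdef, hqdef, hpr0, hpr1, ContinuousLinearMap.proj_apply, ContinuousLinearMap.add_apply, ContinuousLinearMap.smul_apply,
      hpr0e0, hpr1e0, smul_eq_mul, he0, Pi.single_eq_of_ne]
  have hLe1 : ∀ x, L x e1 = p x := by
    intro x
    simp [hLdef, hpdef, hpr0, hpr1, ContinuousLinearMap.proj_apply, ContinuousLinearMap.add_apply, ContinuousLinearMap.smul_apply,
      hpr0e1, hpr1e1, smul_eq_mul, he1, Pi.single_eq_of_ne]
  have hMe0 : ∀ x, M x e0 = r x := by
    intro x
    simp [hMdef, hrdef, hpr0, hpr1, ContinuousLinearMap.proj_apply, ContinuousLinearMap.add_apply, ContinuousLinearMap.smul_apply,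
      hpr0e0, hpr1e0, smul_eq_mul, he0, Pi.single_eq_of_ne]
  have hMe1 : ∀ x, M x e1 = s x := by
    intro x
    simp [hMdef, hsdef, hpr0, hpr1, ContinuousLinearMap.proj_apply, ContinuousLinearMap.add_apply, ContinuousLinearMap.smul_apply,
      hpr0e1, hpr1e1, smul_eq_mul, he1, Pi.single_eq_of_ne]
  have hLapp : ∀ x v, L x v = q x * v 0 + p x * v 1 := by
    intro x v
    rw [myClmApply (L x) v, ← he0, ← he1, hLe0, hLe1]; ring
  have hMapp : ∀ x v, M x v = r x * v 0 + s x * v 1 := by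
    intro x v
    rw [myClmApply (M x) v, ← he0, ← he1, hMe0, hMe1]; ring
  set Φ : (Fin 2 → ℝ) → (Fin 2 → ℝ) := fun x => ![x 0, u1 x] with hΦdef
  set G : (Fin 2 → ℝ) → (Fin 2 → ℝ) := fun x => ![x 1, u2 x] with hGdef
  set DΦ : (Fin 2 → ℝ) → ((Fin 2 → ℝ) →L[ℝ] (Fin 2 → ℝ)) :=
    fun x => ContinuousLinearMap.pi ![pr0, L x] with hDΦdef
  set DG : (Fin 2 → ℝ) → ((Fin 2 → ℝ) →L[ℝ] (Fin 2 → ℝ)) :=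
    fun x => ContinuousLinearMap.pi ![pr1, M x] with hDGdef
  have hΦ0 : ∀ x, Φ x 0 = x 0 := fun x => rfl
  have hΦ1 : ∀ x, Φ x 1 = u1 x := fun x => rfl
  have hG0 : ∀ x, G x 0 = x 1 := fun x => rfl
  have hG1 : ∀ x, G x 1 = u2 x := fun x => rfl
  have hDΦ0 : ∀ x v, DΦ x v 0 = v 0 := fun x v => rfl
  have hDΦ1 : ∀ x v, DΦ x v 1 = L x v := fun x v => rfl
  have hDG0 : ∀ x v, DG x v 0 = v 1 := fun x v => rfl
  have hDG1 : ∀ x v, DG x v 1 = M x v := fun x v => rfl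
  have hΦd : ∀ x, HasFDerivAt Φ (DΦ x) x := by
    intro x
    rw [hasFDerivAt_pi']
    intro i
    fin_cases i
    · show HasFDerivAt (fun x : Fin 2 → ℝ => Φ x 0)
        ((ContinuousLinearMap.proj (R := ℝ) (φ := fun _ : Fin 2 => ℝ) 0).comp (DΦ x)) x
      have h2 : (ContinuousLinearMap.proj (R := ℝ) (φ := fun _ : Fin 2 => ℝ) 0).comp (DΦ x)
          = pr0 := by
        ext v; exact hDΦ0 x v
      rw [h2]
      exact hasFDerivAt_apply (0 : Fin 2) x
    · show HasFDerivAt (fun x : Fin 2 → ℝ => Φ x 1)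
        ((ContinuousLinearMap.proj (R := ℝ) (φ := fun _ : Fin 2 => ℝ) 1).comp (DΦ x)) x
      have h2 : (ContinuousLinearMap.proj (R := ℝ) (φ := fun _ : Fin 2 => ℝ) 1).comp (DΦ x)
          = L x := by
        ext v; exact hDΦ1 x v
      rw [h2]
      exact hU1 x
  have hGd : ∀ x, HasFDerivAt G (DG x) x := by
    intro x
    rw [hasFDerivAt_pi']
    intro i
    fin_cases i
    · show HasFDerivAt (fun x : Fin 2 → ℝ => G x 0)
        ((ContinuousLinearMap.proj (R := ℝ) (φ := fun _ : Fin 2 => ℝ) 0).comp (DG x)) x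
      have h2 : (ContinuousLinearMap.proj (R := ℝ) (φ := fun _ : Fin 2 => ℝ) 0).comp (DG x)
          = pr1 := by
        ext v; exact hDG0 x v
      rw [h2]
      exact hasFDerivAt_apply (1 : Fin 2) x
    · show HasFDerivAt (fun x : Fin 2 → ℝ => G x 1)
        ((ContinuousLinearMap.proj (R := ℝ) (φ := fun _ : Fin 2 => ℝ) 1).comp (DG x)) x
      have h2 : (ContinuousLinearMap.proj (R := ℝ) (φ := fun _ : Fin 2 => ℝ) 1).comp (DG x)
          = M x := by
        ext v; exact hDG1 x v
      rw [h2]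
      exact hU2 x
  have hφi : ∀ i : Fin 2, ContDiff ℝ ((⊤ : ℕ∞) : WithTop ℕ∞) (fun x => φ x i) :=
    fun i => contDiff_pi.1 hφ i
  have hu1cd : ContDiff ℝ ((⊤ : ℕ∞) : WithTop ℕ∞) u1 := by
    apply ContDiff.add
    apply ContDiff.add
    · exact (contDiff_const.mul (contDiff_pi.1 contDiff_id 0))
    · exact (contDiff_const.mul (contDiff_pi.1 contDiff_id 1))
    · exact hφi 0
  have hu2cd : ContDiff ℝ ((⊤ : ℕ∞) : WithTop ℕ∞) u2 := by
    apply ContDiff.add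
    apply ContDiff.add
    · exact (contDiff_const.mul (contDiff_pi.1 contDiff_id 0))
    · exact (contDiff_const.mul (contDiff_pi.1 contDiff_id 1))
    · exact hφi 1
  have hΦcd : ContDiff ℝ ((⊤ : ℕ∞) : WithTop ℕ∞) Φ := by
    rw [hΦdef, contDiff_pi]
    intro i
    fin_cases i
    · exact contDiff_pi.1 contDiff_id 0
    · exact hu1cd
  have hGcd : ContDiff ℝ ((⊤ : ℕ∞) : WithTop ℕ∞) G := by
    rw [hGdef, contDiff_pi]
    intro i
    fin_cases i
    · exact contDiff_pi.1 contDiff_id 1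
    · exact hu2cd
  have hΦcont : Continuous Φ := hΦcd.continuous
  have hcurve : ∀ a t : ℝ, HasDerivAt (fun t => u1 ![a, t]) (p ![a, t]) t := by
    intro a t
    have h1 : HasDerivAt (fun t : ℝ => (![a, t] : Fin 2 → ℝ)) e1 t := by
      rw [hasDerivAt_pi]
      intro i
      fin_cases i
      · simpa [he0, he1, Pi.single_eq_of_ne] using hasDerivAt_const t a
      · simp [he1]; exact hasDerivAt_id' t
    have h2 := (hU1 ![a, t]).comp_hasDerivAt t h1
    rw [← hLe1]; exact h2
  have hmono : ∀ a : ℝ, StrictMono (fun t => u1 ![a, t]) := by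
    intro a
    apply strictMono_of_deriv_pos
    intro t
    rw [(hcurve a t).deriv]
    exact hp_pos _
  obtain ⟨Cb, hCb⟩ : ∃ Cb, ∀ x, ‖φ x‖ ≤ Cb := hφcs.exists_bound_of_continuous hφ.continuous
  have hφbd : ∀ x : Fin 2 → ℝ, |φ x 0| ≤ Cb := by
    intro x
    exact le_trans (by simpa [Real.norm_eq_abs] using norm_le_pi_norm (φ x) 0) (hCb x)
  have hsurj : ∀ a : ℝ, Function.Surjective (fun t => u1 ![a, t]) := by
    intro a
    apply Continuous.surjective
    · refine hu1cd.continuous.comp (continuous_pi fun i => ?_)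
      fin_cases i
      · exact continuous_const
      · exact continuous_id
    · apply Filter.tendsto_atTop_mono (f := fun t => (A 0 0 * a - Cb) + A 0 1 * t)
      · intro t
        have h1 : -Cb ≤ φ ![a, t] 0 := neg_le_of_abs_le (hφbd _)
        have h2 : u1 ![a, t] = A 0 0 * a + A 0 1 * t + φ ![a, t] 0 := by
          simp [hu1def]
        rw [h2]
        linarith
      · exact Filter.tendsto_atTop_add_const_left _ _
          (Filter.Tendsto.const_mul_atTop hA01 Filter.tendsto_id)
    · apply Filter.tendsto_atBot_mono (f := fun t => (A 0 0 * a + Cb) + A 0 1 * t)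
      · intro t
        have h1 : φ ![a, t] 0 ≤ Cb := le_of_abs_le (hφbd _)
        have h2 : u1 ![a, t] = A 0 0 * a + A 0 1 * t + φ ![a, t] 0 := by
          simp [hu1def]
        rw [h2]
        linarith
      · exact Filter.tendsto_atBot_add_const_left _ _
          (Filter.Tendsto.const_mul_atBot hA01 Filter.tendsto_id)
  set w : (Fin 2 → ℝ) → ℝ := fun y => Classical.choose (hsurj (y 0) (y 1)) with hwdef
  have hw : ∀ y, u1 ![y 0, w y] = y 1 := fun y => Classical.choose_spec (hsurj (y 0) (y 1))
  set Φinv : (Fin 2 → ℝ) → (Fin 2 → ℝ) := fun y => ![y 0, w y] with hΦinvdef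
  have hΦinv_right : ∀ y, Φ (Φinv y) = y := by
    intro y
    funext i
    fin_cases i
    · show Φinv y 0 = y 0
      rfl
    · show u1 (Φinv y) = y 1
      have h3 : Φinv y = ![y 0, w y] := rfl
      rw [h3]
      exact hw y
  have hΦinj : Function.Injective Φ := by
    intro x x' hxx
    have h0 : x 0 = x' 0 := by
      have := congrFun hxx 0
      simpa [hΦ0] using this
    have h1 : u1 x = u1 x' := by
      have := congrFun hxx 1
      simpa [hΦ1] using this
    have hx : u1 ![x 0, x 1] = u1 ![x' 0, x' 1] := by
      rw [myVecEta, myVecEta]; exact h1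
    rw [h0] at hx
    have h2 : x 1 = x' 1 := (hmono (x' 0)).injective hx
    funext i
    fin_cases i
    · exact h0
    · exact h2
  have hΦinv_left : ∀ x, Φinv (Φ x) = x := fun x => hΦinj (hΦinv_right (Φ x))
  have hΦsurj : Function.Surjective Φ := fun y => ⟨Φinv y, hΦinv_right y⟩
  set N : (Fin 2 → ℝ) → ((Fin 2 → ℝ) →L[ℝ] (Fin 2 → ℝ)) :=
    fun x => ContinuousLinearMap.pi ![pr0, (p x)⁻¹ • (pr1 - q x • pr0)] with hNdef
  have hN0 : ∀ x v, N x v 0 = v 0 := fun x v => rfl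
  have hN1 : ∀ x v, N x v 1 = (p x)⁻¹ * (v 1 - q x * v 0) := fun x v => rfl
  have hNleft : ∀ x, Function.LeftInverse (N x) (DΦ x) := by
    intro x v
    funext i
    fin_cases i
    · rfl
    · show N x (DΦ x v) 1 = v 1
      have hp0 : p x ≠ 0 := (hp_pos x).ne'
      rw [hN1]
      rw [hDΦ1, hDΦ0, hLapp]
      field_simp
      ring
  have hNright : ∀ x, Function.RightInverse (N x) (DΦ x) := by
    intro x v
    funext i
    fin_cases i
    · rfl
    · show DΦ x (N x v) 1 = v 1
      have hp0 : p x ≠ 0 := (hp_pos x).ne'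
      rw [hDΦ1, hLapp, hN0, hN1]
      field_simp
      ring
  set DΦe : (Fin 2 → ℝ) → ((Fin 2 → ℝ) ≃L[ℝ] (Fin 2 → ℝ)) :=
    fun x => ContinuousLinearEquiv.equivOfInverse (DΦ x) (N x) (hNleft x) (hNright x) with hDΦedef
  have hDΦecoe : ∀ x, ((DΦe x) : (Fin 2 → ℝ) →L[ℝ] (Fin 2 → ℝ)) = DΦ x := fun x => rfl
  have hDΦesymm : ∀ x, (((DΦe x).symm) : (Fin 2 → ℝ) →L[ℝ] (Fin 2 → ℝ)) = N x := fun x => rfl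
  have hΦstrict : ∀ x, HasStrictFDerivAt Φ ((DΦe x) : (Fin 2 → ℝ) →L[ℝ] (Fin 2 → ℝ)) x := by
    intro x
    exact hΦcd.contDiffAt.hasStrictFDerivAt' (by rw [hDΦecoe]; exact hΦd x) hone
  have hΦinvd : ∀ y, HasFDerivAt Φinv (N (Φinv y)) y := by
    intro y
    have h1 := (hΦstrict (Φinv y)).to_local_left_inverse
      (Filter.Eventually.of_forall hΦinv_left)
    rw [hΦinv_right y] at h1
    rw [← hDΦesymm]
    exact h1.hasFDerivAt
  have hΦinvcd : ContDiff ℝ ((⊤ : ℕ∞) : WithTop ℕ∞) Φinv := by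
    rw [contDiff_iff_contDiffAt]
    intro y
    have hy : y = Φ (Φinv y) := (hΦinv_right y).symm
    rw [hy]
    set x := Φinv y with hxdef
    have hcda : ContDiffAt ℝ ((⊤ : ℕ∞) : WithTop ℕ∞) Φ x := hΦcd.contDiffAt
    have hfd : HasFDerivAt Φ ((DΦe x) : (Fin 2 → ℝ) →L[ℝ] (Fin 2 → ℝ)) x := by
      rw [hDΦecoe]; exact hΦd x
    have hloc := hcda.to_localInverse (f' := DΦe x) hfd hone
    apply hloc.congr_of_eventuallyEq
    have hre := (hcda.hasStrictFDerivAt' hfd hone).eventually_right_inverse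
    filter_upwards [hre] with z hz
    conv_lhs => rw [← hz]
    rw [hΦinv_left]
    rfl
  have hΦinvcont : Continuous Φinv := hΦinvcd.continuous
  set ΦH : (Fin 2 → ℝ) ≃ₜ (Fin 2 → ℝ) :=
    { toFun := Φ, invFun := Φinv, left_inv := hΦinv_left, right_inv := hΦinv_right,
      continuous_toFun := hΦcont, continuous_invFun := hΦinvcont } with hΦHdef
  have hΦHcoe : ⇑ΦH = Φ := rfl
  set B : Matrix (Fin 2) (Fin 2) ℝ := Psi A with hBdef
  have hB00 : B 0 0 = (A 0 1)⁻¹ * (-(A 0 0)) := by simp [hBdef, Psi]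
  have hB01 : B 0 1 = (A 0 1)⁻¹ * 1 := by simp [hBdef, Psi]
  have hB10 : B 1 0 = (A 0 1)⁻¹ * (-A.det) := by simp [hBdef, Psi]
  have hB11 : B 1 1 = (A 0 1)⁻¹ * (A 1 1) := by simp [hBdef, Psi]
  set TB : (Fin 2 → ℝ) →L[ℝ] (Fin 2 → ℝ) :=
    ContinuousLinearMap.pi ![B 0 0 • pr0 + B 0 1 • pr1, B 1 0 • pr0 + B 1 1 • pr1] with hTBdef
  have hTB0 : ∀ v, TB v 0 = B 0 0 * v 0 + B 0 1 * v 1 := fun v => rfl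
  have hTB1 : ∀ v, TB v 1 = B 1 0 * v 0 + B 1 1 * v 1 := fun v => rfl
  set φt : (Fin 2 → ℝ) → (Fin 2 → ℝ) := fun y => G (Φinv y) - TB y with hφtdef
  have hφtcd : ContDiff ℝ ((⊤ : ℕ∞) : WithTop ℕ∞) φt :=
    (hGcd.comp hΦinvcd).sub TB.contDiff
  have hφtd : ∀ y, HasFDerivAt φt ((DG (Φinv y)).comp (N (Φinv y)) - TB) y := by
    intro y
    exact ((hGd (Φinv y)).comp y (hΦinvd y)).sub TB.hasFDerivAt
  have hφtfderiv : ∀ y, fderiv ℝ φt y = (DG (Φinv y)).comp (N (Φinv y)) - TB :=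
    fun y => (hφtd y).fderiv
  have hkey : ∀ x, Psi A + jacobianM 2 2 φt (Φ x) = Psi (A + jacobianM 2 2 φ x) := by
    intro x
    have hX01 : (A + jacobianM 2 2 φ x) 0 1 = p x := by
      simp [Matrix.add_apply, jacobianM_apply, hDφdef, hpdef, he1]
    have hX00 : (A + jacobianM 2 2 φ x) 0 0 = q x := by
      simp [Matrix.add_apply, jacobianM_apply, hDφdef, hqdef, he0]
    have hX10 : (A + jacobianM 2 2 φ x) 1 0 = r x := by
      simp [Matrix.add_apply, jacobianM_apply, hDφdef, hrdef, he0]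
    have hX11 : (A + jacobianM 2 2 φ x) 1 1 = s x := by
      simp [Matrix.add_apply, jacobianM_apply, hDφdef, hsdef, he1]
    have hdet : (A + jacobianM 2 2 φ x).det = q x * s x - p x * r x := by
      rw [Matrix.det_fin_two, hX00, hX01, hX10, hX11]
    have hp0 : p x ≠ 0 := (hp_pos x).ne'
    have hNe0 : ∀ i : Fin 2, N x e0 i = ![1, (p x)⁻¹ * (0 - q x * 1)] i := by
      intro i
      fin_cases i
      · show N x e0 0 = (![1, (p x)⁻¹ * (0 - q x * 1)] : Fin 2 → ℝ) 0
        rw [hN0]; simp [he0]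
      · show N x e0 1 = (![1, (p x)⁻¹ * (0 - q x * 1)] : Fin 2 → ℝ) 1
        rw [hN1]; simp [he0, he1, Pi.single_eq_of_ne]
    have hNe1 : ∀ i : Fin 2, N x e1 i = ![0, (p x)⁻¹ * (1 - q x * 0)] i := by
      intro i
      fin_cases i
      · show N x e1 0 = (![0, (p x)⁻¹ * (1 - q x * 0)] : Fin 2 → ℝ) 0
        rw [hN0]; simp [he1, Pi.single_eq_of_ne]
      · show N x e1 1 = (![0, (p x)⁻¹ * (1 - q x * 0)] : Fin 2 → ℝ) 1
        rw [hN1]; simp [he0, he1, Pi.single_eq_of_ne]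
    ext i j
    have hiden : Psi A i j + jacobianM 2 2 φt (Φ x) i j
        = DG x (N x (Pi.single j 1)) i := by
      rw [jacobianM_apply, hφtfderiv]
      rw [hΦinv_left]
      simp only [ContinuousLinearMap.sub_apply, ContinuousLinearMap.comp_apply]
      have hTBij : TB (Pi.single j 1) i = B i j := by
        fin_cases i <;> fin_cases j <;>
          simp [hTB0, hTB1, he0, he1, Pi.single_eq_of_ne]
      rw [Pi.sub_apply, hTBij]
      have h4 : Psi A i j = B i j := rfl
      rw [h4]
      ring
    rw [Matrix.add_apply, hiden]
    fin_cases i <;> fin_cases j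
    · show DG x (N x e0) 0 = Psi (A + jacobianM 2 2 φ x) 0 0
      rw [hDG0]
      rw [show (N x e0) 1 = (![1, (p x)⁻¹ * (0 - q x * 1)] : Fin 2 → ℝ) 1 from hNe0 1]
      simp only [Psi, Matrix.smul_apply, Matrix.cons_val', Matrix.cons_val_zero,
        Matrix.cons_val_one, Matrix.head_cons, Matrix.head_fin_const, Matrix.empty_val',
        Matrix.cons_val_fin_one, smul_eq_mul, Matrix.of_apply]
      rw [hX01, hX00]
      field_simp
      ring
    · show DG x (N x e1) 0 = Psi (A + jacobianM 2 2 φ x) 0 1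
      rw [hDG0]
      rw [show (N x e1) 1 = (![0, (p x)⁻¹ * (1 - q x * 0)] : Fin 2 → ℝ) 1 from hNe1 1]
      simp only [Psi, Matrix.smul_apply, Matrix.cons_val', Matrix.cons_val_zero,
        Matrix.cons_val_one, Matrix.head_cons, Matrix.head_fin_const, Matrix.empty_val',
        Matrix.cons_val_fin_one, smul_eq_mul, Matrix.of_apply]
      rw [hX01]
      field_simp
      ring
    · show DG x (N x e0) 1 = Psi (A + jacobianM 2 2 φ x) 1 0
      rw [hDG1, hMapp]
      rw [show (N x e0) 0 = (![1, (p x)⁻¹ * (0 - q x * 1)] : Fin 2 → ℝ) 0 from hNe0 0,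
        show (N x e0) 1 = (![1, (p x)⁻¹ * (0 - q x * 1)] : Fin 2 → ℝ) 1 from hNe0 1]
      simp only [Psi, Matrix.smul_apply, Matrix.cons_val', Matrix.cons_val_zero,
        Matrix.cons_val_one, Matrix.head_cons, Matrix.head_fin_const, Matrix.empty_val',
        Matrix.cons_val_fin_one, smul_eq_mul, Matrix.of_apply]
      rw [hX01, hdet]
      field_simp
      ring
    · show DG x (N x e1) 1 = Psi (A + jacobianM 2 2 φ x) 1 1
      rw [hDG1, hMapp]
      rw [show (N x e1) 0 = (![0, (p x)⁻¹ * (1 - q x * 0)] : Fin 2 → ℝ) 0 from hNe1 0,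
        show (N x e1) 1 = (![0, (p x)⁻¹ * (1 - q x * 0)] : Fin 2 → ℝ) 1 from hNe1 1]
      simp only [Psi, Matrix.smul_apply, Matrix.cons_val', Matrix.cons_val_zero,
        Matrix.cons_val_one, Matrix.head_cons, Matrix.head_fin_const, Matrix.empty_val',
        Matrix.cons_val_fin_one, smul_eq_mul, Matrix.of_apply]
      rw [hX01, hX11]
      field_simp
      ring
  have hPsi01 : ∀ X : Matrix (Fin 2) (Fin 2) ℝ, Psi X 0 1 = (X 0 1)⁻¹ := by
    intro X
    simp [Psi]
  have hmem' : ∀ y, Psi A + jacobianM 2 2 φt y ∈ Mplus := by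
    intro y
    have hy : y = Φ (Φinv y) := (hΦinv_right y).symm
    rw [hy, hkey (Φinv y)]
    show 0 < Psi (A + jacobianM 2 2 φ (Φinv y)) 0 1
    rw [hPsi01]
    have h5 : (A + jacobianM 2 2 φ (Φinv y)) 0 1 = p (Φinv y) := by
      simp [Matrix.add_apply, jacobianM_apply, hDφdef, hpdef, he1]
    rw [h5]
    exact inv_pos.2 (hp_pos _)
  set Ω' : Set (Fin 2 → ℝ) := Φ '' Ω with hΩ'def
  have hΩ'o : IsOpen Ω' := by
    rw [hΩ'def, ← hΦHcoe]
    exact ΦH.isOpenMap Ω hΩo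
  have hΩ'ne : Ω'.Nonempty := hΩne.image Φ
  have hΩ'b : Bornology.IsBounded Ω' := by
    have hcl : IsCompact (closure Ω) := hΩb.isCompact_closure
    exact ((hcl.image hΦcont).isBounded).subset (Set.image_mono subset_closure)
  have hφt0 : ∀ x, x ∉ tsupport φ → φt (Φ x) = 0 := by
    intro x hx
    have hφ0 : φ x = 0 := image_eq_zero_of_notMem_tsupport hx
    have hφ00 : φ x 0 = 0 := by rw [hφ0]; rfl
    have hφ01 : φ x 1 = 0 := by rw [hφ0]; rfl
    have hu1x : u1 x = A 0 0 * x 0 + A 0 1 * x 1 := by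
      simp [hu1def, hφ00]
    have hu2x : u2 x = A 1 0 * x 0 + A 1 1 * x 1 := by
      simp [hu2def, hφ01]
    have hdetA : A.det = A 0 0 * A 1 1 - A 0 1 * A 1 0 := Matrix.det_fin_two A
    have hΦx0 : Φ x 0 = x 0 := hΦ0 x
    have hΦx1 : Φ x 1 = u1 x := hΦ1 x
    have hA01' : A 0 1 ≠ 0 := hA01.ne'
    rw [hφtdef]
    funext i
    simp only [Pi.sub_apply]
    rw [hΦinv_left]
    fin_cases i
    · show G x 0 - TB (Φ x) 0 = 0
      rw [hG0, hTB0, hΦx0, hΦx1, hu1x, hB00, hB01]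
      exact myCancel1 (A 0 0) (A 0 1) (x 0) (x 1) hA01'
    · show G x 1 - TB (Φ x) 1 = 0
      rw [hG1, hTB1, hΦx0, hΦx1, hu1x, hu2x, hB10, hB11, hdetA]
      exact myCancel2 (A 0 0) (A 0 1) (A 1 0) (A 1 1) (x 0) (x 1) hA01'
  have hφt0' : ∀ y, y ∉ Φ '' tsupport φ → φt y = 0 := by
    intro y hy
    have hx : Φinv y ∉ tsupport φ := by
      intro hc
      exact hy ⟨Φinv y, hc, hΦinv_right y⟩
    have := hφt0 (Φinv y) hx
    rwa [hΦinv_right y] at this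
  have hφtcs : HasCompactSupport φt :=
    HasCompactSupport.intro (hφcs.image hΦcont) hφt0'
  have hφtΩ : tsupport φt ⊆ Ω' := by
    have h1 : tsupport φt ⊆ Φ '' tsupport φ := by
      apply closure_minimal _ (hφcs.image hΦcont).isClosed
      intro y hy
      by_contra hny
      exact hy (hφt0' y hny)
    exact h1.trans (Set.image_mono hφΩ)
  have hmain := hh Ω' hΩ'o hΩ'ne hΩ'b (Psi A) φt hφtcd hφtcs hφtΩ hmem'
  -- determinant of DΦ
  have hdet : ∀ x, (DΦ x).det = p x := by
    intro x
    have h1 : (DΦ x).det = LinearMap.det ((DΦ x) : (Fin 2 → ℝ) →ₗ[ℝ] (Fin 2 → ℝ)) := rfl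
    rw [h1, ← LinearMap.det_toMatrix (Pi.basisFun ℝ (Fin 2)), Matrix.det_fin_two]
    have hentry : ∀ i j : Fin 2,
        (LinearMap.toMatrix (Pi.basisFun ℝ (Fin 2)) (Pi.basisFun ℝ (Fin 2))
          ((DΦ x) : (Fin 2 → ℝ) →ₗ[ℝ] (Fin 2 → ℝ))) i j = DΦ x (Pi.single j 1) i := by
      intro i j
      rw [LinearMap.toMatrix_apply]
      simp
    rw [hentry 0 0, hentry 0 1, hentry 1 0, hentry 1 1]
    rw [hDΦ0, hDΦ0, hDΦ1, hDΦ1, ← he0, ← he1, hLe0, hLe1]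
    rw [he0, he1]
    simp [Pi.single_eq_of_ne]
  set pnn : (Fin 2 → ℝ) → NNReal := fun x => Real.toNNReal (p x) with hpnndef
  have hpnn_meas : Measurable pnn := (continuous_real_toNNReal.comp hpc).measurable
  have hmap : Measure.map Φ ((volume.restrict Ω).withDensity fun x => (pnn x : ENNReal))
      = volume.restrict Ω' := by
    have hmw := map_withDensity_abs_det_fderiv_eq_addHaar volume hΩo.measurableSet.nullMeasurableSet
      (fun x _ => (hΦd x).hasFDerivWithinAt) (Function.Injective.injOn hΦinj)
    have hdens : (fun x => ENNReal.ofReal |(DΦ x).det|) = fun x => (pnn x : ENNReal) := by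
      funext x
      rw [hdet, abs_of_pos (hp_pos x)]
      rfl
    rw [← hdens]
    exact hmw
  have hMEmb : MeasurableEmbedding Φ := by
    rw [← hΦHcoe]; exact ΦH.measurableEmbedding
  have htrans : ∀ g : (Fin 2 → ℝ) → ℝ, ∫ y in Ω', g y = ∫ x in Ω, p x * g (Φ x) := by
    intro g
    have h1 : ∫ y in Ω', g y
        = ∫ y, g y ∂(Measure.map Φ
            ((volume.restrict Ω).withDensity fun x => (pnn x : ENNReal))) := by
      rw [hmap]
    rw [h1, hMEmb.integral_map, integral_withDensity_eq_integral_smul hpnn_meas]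
    refine integral_congr_ae (Filter.Eventually.of_forall fun x => ?_)
    show pnn x • g (Φ x) = p x * g (Φ x)
    rw [NNReal.smul_def, Real.coe_toNNReal _ (hp_pos x).le]
    rfl
  have hΩfin : volume Ω < ⊤ := hΩb.measure_lt_top
  have hvol : (volume Ω').toReal = ∫ x in Ω, p x := by
    have h1 : ∫ y in Ω', (1 : ℝ) = (volume Ω').toReal := by
      rw [setIntegral_const]
      simp
      rfl
    rw [← h1, htrans]
    simp
  set φ1 : (Fin 2 → ℝ) → ℝ := fun x => φ x 0 with hφ1def
  have hφ1cd : ContDiff ℝ ((⊤ : ℕ∞) : WithTop ℕ∞) φ1 := hφi 0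
  have hφ1cs : HasCompactSupport φ1 :=
    HasCompactSupport.comp_left (g := fun v : Fin 2 → ℝ => v 0) hφcs rfl
  have hφ1d : Differentiable ℝ φ1 := hφ1cd.differentiable hone
  have hfd1 : ∀ x, fderiv ℝ φ1 x = pr0.comp (Dφ x) := by
    intro x
    exact (pr0.hasFDerivAt.comp x (hDφ x)).fderiv
  have hfder_cont : Continuous fun x => fderiv ℝ φ1 x e1 :=
    (hφ1cd.continuous_fderiv hone).clm_apply continuous_const
  have hfder_cs : HasCompactSupport fun x => fderiv ℝ φ1 x e1 :=
    HasCompactSupport.comp_left (g := fun T : (Fin 2 → ℝ) →L[ℝ] ℝ => T e1)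
      (hφ1cs.fderiv ℝ) (by simp)
  have hibp : ∫ x, fderiv ℝ φ1 x e1 = 0 := by
    have hconstd : ∀ x : Fin 2 → ℝ, fderiv ℝ (fun _ : Fin 2 → ℝ => (1 : ℝ)) x = 0 :=
      fun x => fderiv_const_apply 1
    have hi1 : Integrable (fun x : Fin 2 → ℝ =>
        fderiv ℝ (fun _ : Fin 2 → ℝ => (1 : ℝ)) x e1 * φ1 x) volume := by
      have : (fun x : Fin 2 → ℝ =>
          fderiv ℝ (fun _ : Fin 2 → ℝ => (1 : ℝ)) x e1 * φ1 x) = fun _ => 0 := by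
        funext x
        rw [hconstd x]
        simp
      rw [this]
      exact integrable_zero _ _ _
    have hi2 : Integrable (fun x : Fin 2 → ℝ =>
        (1 : ℝ) * fderiv ℝ φ1 x e1) volume := by
      have : (fun x : Fin 2 → ℝ => (1 : ℝ) * fderiv ℝ φ1 x e1)
          = fun x => fderiv ℝ φ1 x e1 := by
        funext x
        rw [one_mul]
      rw [this]
      exact hfder_cont.integrable_of_hasCompactSupport hfder_cs
    have hi3 : Integrable (fun x : Fin 2 → ℝ => (1 : ℝ) * φ1 x) volume := by
      have : (fun x : Fin 2 → ℝ => (1 : ℝ) * φ1 x) = φ1 := by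
        funext x
        rw [one_mul]
      rw [this]
      exact hφ1cd.continuous.integrable_of_hasCompactSupport hφ1cs
    have h0 := integral_mul_fderiv_eq_neg_fderiv_mul_of_integrable (μ := volume)
      (f := fun _ : Fin 2 → ℝ => (1 : ℝ)) (g := φ1) (v := e1)
      hi1 hi2 hi3 (fun x _ => differentiableAt_const 1) (fun x _ => hφ1d x)
    have hL : ∫ x : Fin 2 → ℝ, (1 : ℝ) * fderiv ℝ φ1 x e1 = ∫ x, fderiv ℝ φ1 x e1 := by
      refine integral_congr_ae (Filter.Eventually.of_forall fun x => ?_)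
      exact one_mul _
    have hR : ∫ x : Fin 2 → ℝ,
        fderiv ℝ (fun _ : Fin 2 → ℝ => (1 : ℝ)) x e1 * φ1 x = 0 := by
      have : (fun x : Fin 2 → ℝ =>
          fderiv ℝ (fun _ : Fin 2 → ℝ => (1 : ℝ)) x e1 * φ1 x) = fun _ => 0 := by
        funext x
        rw [hconstd x]
        simp
      rw [this, integral_zero]
    rw [← hL, h0, hR, neg_zero]
  have hDint : ∫ x in Ω, Dφ x e1 0 = 0 := by
    have hz : ∀ x ∉ Ω, Dφ x e1 0 = 0 := by
      intro x hx
      rw [hDφ0 x fun hc => hx (hφΩ hc)]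
      simp
    rw [setIntegral_eq_integral_of_forall_compl_eq_zero hz]
    have h2 : (fun x => Dφ x e1 0) = fun x => fderiv ℝ φ1 x e1 := by
      funext x
      rw [hfd1]
      rfl
    rw [h2, hibp]
  have hDφe10_int : Integrable (fun x => Dφ x e1 0) volume := by
    have hcont : Continuous fun x => Dφ x e1 0 :=
      (continuous_apply (0 : Fin 2)).comp (hDφcont.clm_apply continuous_const)
    have hcs : HasCompactSupport fun x => Dφ x e1 0 :=
      HasCompactSupport.comp_left (g := fun T : (Fin 2 → ℝ) →L[ℝ] (Fin 2 → ℝ) => T e1 0)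
        (hφcs.fderiv ℝ) (by simp)
    exact hcont.integrable_of_hasCompactSupport hcs
  have hpint : ∫ x in Ω, p x = A 0 1 * (volume Ω).toReal := by
    have h3 : ∫ x in Ω, p x = ∫ x in Ω, (A 0 1 + Dφ x e1 0) := rfl
    rw [h3, integral_add (integrableOn_const (C := A 0 1) hΩfin.ne) hDφe10_int.integrableOn]
    rw [hDint, setIntegral_const]
    simp [mul_comm]
    exact Or.inl rfl
  have hfinal : ∫ y in Ω', h (Psi A + jacobianM 2 2 φt y)
      = ∫ x in Ω, dualFn h (A + jacobianM 2 2 φ x) := by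
    rw [htrans]
    refine integral_congr_ae (Filter.Eventually.of_forall fun x => ?_)
    show p x * h (Psi A + jacobianM 2 2 φt (Φ x)) = dualFn h (A + jacobianM 2 2 φ x)
    rw [hkey x]
    have h5 : (A + jacobianM 2 2 φ x) 0 1 = p x := by
      simp [Matrix.add_apply, jacobianM_apply, hDφdef, hpdef, he1]
    simp only [dualFn]
    rw [h5]
  calc dualFn h A * (volume Ω).toReal
      = h (Psi A) * (A 0 1 * (volume Ω).toReal) := by simp only [dualFn]; ring
    _ = h (Psi A) * ∫ x in Ω, p x := by rw [hpint]
    _ = h (Psi A) * (volume Ω').toReal := by rw [hvol]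
    _ ≤ ∫ y in Ω', h (Psi A + jacobianM 2 2 φt y) := hmain
    _ = ∫ x in Ω, dualFn h (A + jacobianM 2 2 φ x) := hfinal


end
end

section
/- If f : M^{2×2}_+ → ℝ is rank-one convex on M^{2×2}_+, then its dual function f̃(X) = X₁₂ · f(Ψ(X)) is rank-one convex on M^{2×2}_+. -/
open MeasureTheory

noncomputable section

lemma Psi00 (X : Matrix (Fin 2) (Fin 2) ℝ) : Psi X 0 0 = (X 0 1)⁻¹ * (-(X 0 0)) := by
  simp [Psi]
lemma Psi01 (X : Matrix (Fin 2) (Fin 2) ℝ) : Psi X 0 1 = (X 0 1)⁻¹ := by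
  simp [Psi]
lemma Psi10 (X : Matrix (Fin 2) (Fin 2) ℝ) : Psi X 1 0 =
    (X 0 1)⁻¹ * (-(X 0 0 * X 1 1 - X 0 1 * X 1 0)) := by
  simp [Psi, Matrix.det_fin_two]
lemma Psi11 (X : Matrix (Fin 2) (Fin 2) ℝ) : Psi X 1 1 = (X 0 1)⁻¹ * X 1 1 := by
  simp [Psi]

lemma rank_le_one_of_det (A : Matrix (Fin 2) (Fin 2) ℝ) (h : A.det = 0) : A.rank ≤ 1 := by
  obtain ⟨v, hv, hAv⟩ := Matrix.exists_mulVec_eq_zero_iff.2 h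
  have hk : LinearMap.ker A.mulVecLin ≠ ⊥ := by
    intro hbot
    exact hv (by simpa [hbot] using (LinearMap.mem_ker.2 (by simpa using hAv) :
      v ∈ LinearMap.ker A.mulVecLin))
  have h1 : 1 ≤ Module.finrank ℝ (LinearMap.ker A.mulVecLin) := by
    rw [Nat.one_le_iff_ne_zero]
    exact fun h0 => hk (Submodule.finrank_eq_zero.1 h0)
  have h2 := LinearMap.finrank_range_add_finrank_ker A.mulVecLin
  have h3 : Module.finrank ℝ (Fin 2 → ℝ) = 2 := by simp
  rw [Matrix.rank]; omega

lemma det_eq_zero_of_rank_le_one (A : Matrix (Fin 2) (Fin 2) ℝ) (h : A.rank ≤ 1) :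
    A.det = 0 := by
  by_contra hd
  have : A.rank = 2 := by
    have := A.rank_of_isUnit ((Matrix.isUnit_iff_isUnit_det A).2 (isUnit_iff_ne_zero.2 hd))
    simpa using this
  omega

/-- If `f` is rank-one convex on `M^{2×2}_+` then its dual `f̃(X) = X₁₂ · f(Ψ(X))` is
rank-one convex on `M^{2×2}_+`. -/
theorem dualFn_rankOneConvexOn (f : Matrix (Fin 2) (Fin 2) ℝ → ℝ)
    (hf : IsRankOneConvexOn Mplus f) :
    IsRankOneConvexOn Mplus (dualFn f) := by
  intro X hX Y hY hrk t ht
  have ha : 0 < X 0 1 := hX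
  have hb : 0 < Y 0 1 := hY
  obtain ⟨ht0, ht1⟩ := ht
  have hdet : (X - Y).det = 0 := det_eq_zero_of_rank_le_one _ hrk
  rw [Matrix.det_fin_two] at hdet
  simp only [Matrix.sub_apply] at hdet
  set c : ℝ := t * X 0 1 + (1 - t) * Y 0 1 with hc
  have hcpos : 0 < c := by
    rcases lt_or_eq_of_le ht0 with h | h
    · nlinarith
    · rw [hc, ← h]; simpa using hb
  set s : ℝ := t * X 0 1 / c with hs
  have hZ : ∀ i j, (t • X + (1 - t) • Y) i j = t * X i j + (1 - t) * Y i j := by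
    intro i j; simp [Matrix.add_apply, Matrix.smul_apply]
  have hZ01 : (t • X + (1 - t) • Y) 0 1 = c := hZ 0 1
  have hPX : Psi X ∈ Mplus := by show 0 < Psi X 0 1; rw [Psi01]; positivity
  have hPY : Psi Y ∈ Mplus := by show 0 < Psi Y 0 1; rw [Psi01]; positivity
  have hrkP : (Psi X - Psi Y).rank ≤ 1 := by
    apply rank_le_one_of_det
    rw [Matrix.det_fin_two]
    simp only [Matrix.sub_apply, Psi00, Psi01, Psi10, Psi11]
    field_simp
    linear_combination (-(X 0 1 * Y 0 1)) * hdet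
  have h1s : 1 - s = (1 - t) * Y 0 1 / c := by
    rw [eq_div_iff hcpos.ne', hs, sub_mul, div_mul_cancel₀ _ hcpos.ne', hc]; ring
  have hkey : Psi (t • X + (1 - t) • Y) = s • Psi X + (1 - s) • Psi Y := by
    ext i j
    fin_cases i <;> fin_cases j <;>
      simp only [Fin.zero_eta, Fin.mk_one, Fin.isValue, Matrix.add_apply, Matrix.smul_apply,
        smul_eq_mul] <;> rw [h1s, hs]
    · rw [Psi00, Psi00, Psi00, hZ01, hZ 0 0]
      field_simp
      ring
    · rw [Psi01, Psi01, Psi01, hZ01]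
      field_simp
      ring
    · have hdZ : (t * X 0 0 + (1 - t) * Y 0 0) * (t * X 1 1 + (1 - t) * Y 1 1) -
          c * (t * X 1 0 + (1 - t) * Y 1 0) =
          t * (X 0 0 * X 1 1 - X 0 1 * X 1 0) + (1 - t) * (Y 0 0 * Y 1 1 - Y 0 1 * Y 1 0) := by
        rw [hc]; linear_combination (-(t * (1 - t))) * hdet
      rw [Psi10, Psi10, Psi10, hZ01, hZ 0 0, hZ 1 1, hZ 1 0, hdZ]
      field_simp
      ring
    · rw [Psi11, Psi11, Psi11, hZ01, hZ 1 1]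
      field_simp
  have hs0 : 0 ≤ s := by positivity
  have hs1 : s ≤ 1 := by
    rw [hs, div_le_one hcpos, hc]; nlinarith
  have hmain := hf (Psi X) hPX (Psi Y) hPY hrkP s ⟨hs0, hs1⟩
  have heq : dualFn f (t • X + (1 - t) • Y) = c * f (s • Psi X + (1 - s) • Psi Y) := by
    rw [dualFn, hZ01, hkey]
  rw [heq]
  calc c * f (s • Psi X + (1 - s) • Psi Y)
      ≤ c * (s * f (Psi X) + (1 - s) * f (Psi Y)) :=
        mul_le_mul_of_nonneg_left hmain hcpos.le
    _ = t * dualFn f X + (1 - t) * dualFn f Y := by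
        rw [dualFn, dualFn, hs, h1s]
        field_simp

end
end
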